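/- arXiv:0807.4285 — 3 statements merged into one kernel-verified Lean document; each statement's English description precedes it below -/
import Mathlib

section
/- Assume K is terminating, i.e. K(∞) := 1 − Σ_{n≥1} K(n) > 0. Then the renewal mass function satisfies u_n ~ K(n)/K(∞)² as n → ∞, i.e. lim_{n→∞} u_n · K(∞)² / K(n) = 1. -/
open MeasureTheory ProbabilityTheory Filter Topology

/-- Constrained partition function with site-dependent log-weights `f`:
`Z_N = Σ_{k, 0=t₀<⋯<t_k=N} Π_i K(tᵢ-tᵢ₋₁) exp(f tᵢ)`, written as a sum
over compositions of `N` (for `N = 0` this equals `1`). -/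
noncomputable def Zc (K : ℕ → ℝ) (f : ℕ → ℝ) (N : ℕ) : ℝ :=
  ∑ c : Composition N,
    ∏ i : Fin c.length, K (c.blocksFun i) * Real.exp (f (c.sizeUpTo (i + 1)))

/-- Constrained homogeneous partition function `Z^c_{N,h}`. -/
noncomputable def ZcHom (K : ℕ → ℝ) (h : ℝ) (N : ℕ) : ℝ :=
  Zc K (fun _ => h) N

/-- Constrained disordered partition function `Z^c_{N,ω}` at parameters `(β, h)`. -/
noncomputable def ZcQ (K : ℕ → ℝ) (β h : ℝ) (ω : ℕ → ℝ) (N : ℕ) : ℝ :=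
  Zc K (fun n => β * ω n + h) N

/-- Homogeneous free energy `F(0,h) = sup_{N ≥ 1} (1/N) log Z^c_{N,h}`. -/
noncomputable def F0 (K : ℕ → ℝ) (h : ℝ) : ℝ :=
  ⨆ N : ℕ, Real.log (ZcHom K h (N + 1)) / (N + 1)

/-- Quenched free energy `F(β,h) = sup_{N ≥ 1} (1/N) 𝔼[log Z^c_{N,ω}]`. -/
noncomputable def Fq (K : ℕ → ℝ) (P : Measure (ℕ → ℝ)) (β h : ℝ) : ℝ :=
  ⨆ N : ℕ, (∫ ω, Real.log (ZcQ K β h ω (N + 1)) ∂P) / (N + 1)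

/-- Homogeneous critical point `h_c(0) = -log Σ_{n≥1} K(n)`. -/
noncomputable def hc0 (K : ℕ → ℝ) : ℝ :=
  - Real.log (∑' n : ℕ, K (n + 1))

/-- Quenched critical point `h_c(β) = inf {h | F(β,h) > 0}`. -/
noncomputable def hcQ (K : ℕ → ℝ) (P : Measure (ℕ → ℝ)) (β : ℝ) : ℝ :=
  sInf {h : ℝ | 0 < Fq K P β h}

/-- The renewal mass function: `u 0 = 1`, `u n = Σ_{m=1}^n K(m) u_{n-m}`. -/
noncomputable def renewalMass (K : ℕ → ℝ) : ℕ → ℝ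
  | 0 => 1
  | n + 1 => ∑ m ∈ Finset.range (n + 1), K (m + 1) * renewalMass K (n - m)

/-- `\bar K(m) = 1 - Σ_{n=1}^m K(n)`. -/
noncomputable def Kbar (K : ℕ → ℝ) (m : ℕ) : ℝ :=
  1 - ∑ n ∈ Finset.Icc 1 m, K n

/-- Free homogeneous partition function `Z^f_{N,h} = Σ_{n=0}^N Z^c_{n,h} \bar K(N-n)`. -/
noncomputable def ZfHom (K : ℕ → ℝ) (h : ℝ) (N : ℕ) : ℝ :=
  ∑ n ∈ Finset.range (N + 1), ZcHom K h n * Kbar K (N - n)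

/-- `P` is the law of an IID sequence of standard Gaussian random variables. -/
def IsStdGaussianIID (P : Measure (ℕ → ℝ)) : Prop :=
  IsProbabilityMeasure P ∧
    iIndepFun (fun n (ω : ℕ → ℝ) => ω n) P ∧
    ∀ n : ℕ, P.map (fun ω => ω n) = gaussianReal 0 1


set_option maxHeartbeats 1000000

namespace RenewalAux

variable {K : ℕ → ℝ}

theorem u_nonneg (hKnn : ∀ n, 0 ≤ K n) : ∀ n, 0 ≤ renewalMass K n := by
  intro n
  induction n using Nat.strong_induction_on with
  | _ n ih =>
    match n with
    | 0 => simp [renewalMass]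
    | n + 1 =>
      rw [renewalMass]
      exact Finset.sum_nonneg fun m hm => mul_nonneg (hKnn _) (ih _ (by omega))

theorem u_rec (K : ℕ → ℝ) (n : ℕ) :
    renewalMass K (n + 1) = ∑ j ∈ Finset.range (n + 1), K (n + 1 - j) * renewalMass K j := by
  rw [renewalMass, ← Finset.sum_range_reflect]
  apply Finset.sum_congr rfl
  intro m hm
  simp only [Finset.mem_range] at hm
  have h1 : n + 1 - 1 - m + 1 = n + 1 - m := by omega
  have h2 : n - (n + 1 - 1 - m) = m := by omega
  rw [h1, h2]

end RenewalAux

namespace RenewalAux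

theorem S_eq (K : ℕ → ℝ) (N : ℕ) :
    ∑ n ∈ Finset.range (N + 1), renewalMass K n
      = 1 + ∑ m ∈ Finset.range N, K (m + 1) * ∑ k ∈ Finset.range (N - m), renewalMass K k := by
  rw [Finset.sum_range_succ']
  have h0 : renewalMass K 0 = 1 := by simp [renewalMass]
  rw [h0, add_comm]
  congr 1
  have : ∀ n ∈ Finset.range N, renewalMass K (n + 1)
      = ∑ m ∈ Finset.range (n + 1), K (m + 1) * renewalMass K (n - m) := by
    intro n _; rw [renewalMass]
  rw [Finset.sum_congr rfl this]
  rw [Finset.sum_comm' (t' := Finset.range N) (s' := fun m => Finset.Ico m N)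
    (by intro n m; simp [Finset.mem_range, Finset.mem_Ico]; omega)]
  apply Finset.sum_congr rfl
  intro m hm
  rw [Finset.mul_sum, Finset.sum_Ico_eq_sum_range]
  apply Finset.sum_congr rfl
  intro k hk
  congr 2
  omega

theorem S_le (hKnn : ∀ n, 0 ≤ K n) (hKsummable : Summable fun n : ℕ => K (n + 1))
    (hterm : 0 < 1 - ∑' n : ℕ, K (n + 1)) (N : ℕ) :
    ∑ n ∈ Finset.range N, renewalMass K n ≤ (1 - ∑' n : ℕ, K (n + 1))⁻¹ := by
  set s := ∑' n : ℕ, K (n + 1) with hs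
  have hs0 : 0 ≤ s := tsum_nonneg fun n => hKnn _
  match N with
  | 0 => simp; linarith
  | N + 1 =>
      set S := ∑ n ∈ Finset.range (N + 1), renewalMass K n with hS
      have hSnn : 0 ≤ S := Finset.sum_nonneg fun n _ => u_nonneg hKnn n
      have h1 : ∑ m ∈ Finset.range N, K (m + 1) * ∑ k ∈ Finset.range (N - m), renewalMass K k
          ≤ ∑ m ∈ Finset.range N, K (m + 1) * S := by
        apply Finset.sum_le_sum
        intro m hm
        apply mul_le_mul_of_nonneg_left _ (hKnn _)
        apply Finset.sum_le_sum_of_subset_of_nonneg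
        · exact Finset.range_subset_range.2 (by omega)
        · intro k _ _; exact u_nonneg hKnn k
      have h2 : ∑ m ∈ Finset.range N, K (m + 1) * S ≤ s * S := by
        rw [← Finset.sum_mul]
        exact mul_le_mul_of_nonneg_right (hKsummable.sum_le_tsum _ (fun m _ => hKnn _)) hSnn
      have hSeq := S_eq K N
      rw [← hS] at hSeq
      have key : S ≤ 1 + s * S := by linarith
      rw [inv_eq_one_div, le_div_iff₀ hterm]
      nlinarith

theorem u_summable (hKnn : ∀ n, 0 ≤ K n) (hKsummable : Summable fun n : ℕ => K (n + 1))
    (hterm : 0 < 1 - ∑' n : ℕ, K (n + 1)) : Summable (renewalMass K) :=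
  summable_of_sum_range_le (fun n => u_nonneg hKnn n) (S_le hKnn hKsummable hterm)

theorem u_tsum (hKnn : ∀ n, 0 ≤ K n) (hKsummable : Summable fun n : ℕ => K (n + 1))
    (hterm : 0 < 1 - ∑' n : ℕ, K (n + 1)) :
    ∑' n, renewalMass K n = (1 - ∑' n : ℕ, K (n + 1))⁻¹ := by
  set s := ∑' n : ℕ, K (n + 1) with hs
  set U := ∑' n, renewalMass K n with hU
  have hsum := u_summable hKnn hKsummable hterm
  have h0 : renewalMass K 0 = 1 := by simp [renewalMass]
  have hrec : ∀ n : ℕ, renewalMass K (n + 1)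
      = ∑ m ∈ Finset.range (n + 1), K (m + 1) * renewalMass K (n - m) := by
    intro n; rw [renewalMass]
  have h : ∑' n : ℕ, renewalMass K (n + 1) = s * U := by
    rw [tsum_congr hrec, hs, hU, ← Summable.tsum_mul_tsum_eq_tsum_sum_range hKsummable hsum]
    exact Summable.mul_of_nonneg hKsummable hsum (fun n => hKnn _) (fun n => u_nonneg hKnn n)
  have e1 : U = 1 + ∑' n : ℕ, renewalMass K (n + 1) := by
    rw [hU, Summable.tsum_eq_zero_add hsum, h0]
  have key : U = 1 + s * U := by rw [h] at e1; exact e1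
  have h1s : (1 : ℝ) - s ≠ 0 := ne_of_gt hterm
  field_simp
  nlinarith [key]

end RenewalAux

namespace RenewalAux

variable {K : ℕ → ℝ} {α : ℝ} {L : ℕ → ℝ} {cK : ℝ}

theorem g_tendsto (hcK : 0 < cK)
    (hKform : ∀ n : ℕ, 1 ≤ n → K n = L n / (n : ℝ) ^ (1 + α))
    (hL : Tendsto L atTop (nhds cK)) :
    Tendsto (fun n : ℕ => K n * (n : ℝ) ^ (1 + α)) atTop (nhds cK) := by
  apply hL.congr'
  filter_upwards [eventually_ge_atTop 1] with n hn
  have hn0 : (0 : ℝ) < (n : ℝ) := by exact_mod_cast hn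
  rw [hKform n hn, div_mul_cancel₀]
  exact ne_of_gt (Real.rpow_pos_of_pos hn0 _)

/-- sandwich: there is `N₁ ≥ 1` with `cK/2 ≤ K n * n^(1+α) ≤ 2 cK` for `n ≥ N₁`. -/
theorem K_sandwich (hcK : 0 < cK)
    (hKform : ∀ n : ℕ, 1 ≤ n → K n = L n / (n : ℝ) ^ (1 + α))
    (hL : Tendsto L atTop (nhds cK)) :
    ∃ N₁ : ℕ, 1 ≤ N₁ ∧ ∀ n, N₁ ≤ n →
      cK / 2 ≤ K n * (n : ℝ) ^ (1 + α) ∧ K n * (n : ℝ) ^ (1 + α) ≤ 2 * cK := by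
  have h := g_tendsto hcK hKform hL
  have h1 : ∀ᶠ n in atTop, cK / 2 < K n * (n : ℝ) ^ (1 + α) :=
    h.eventually (eventually_gt_nhds (by linarith))
  have h2 : ∀ᶠ n in atTop, K n * (n : ℝ) ^ (1 + α) < 2 * cK :=
    h.eventually (eventually_lt_nhds (by linarith))
  rcases ((h1.and h2).and (eventually_ge_atTop 1)).exists_forall_of_atTop with ⟨N, hN⟩
  exact ⟨max N 1, le_max_right _ _, fun n hn =>
    ⟨(hN n (le_trans (le_max_left _ _) hn)).1.1.le, (hN n (le_trans (le_max_left _ _) hn)).1.2.le⟩⟩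

theorem K_pos_of_sandwich (hcK : 0 < cK) {N₁ : ℕ} (h1 : 1 ≤ N₁)
    (hs : ∀ n, N₁ ≤ n → cK / 2 ≤ K n * (n : ℝ) ^ (1 + α) ∧ K n * (n : ℝ) ^ (1 + α) ≤ 2 * cK)
    {n : ℕ} (hn : N₁ ≤ n) : 0 < K n := by
  have hn0 : (0 : ℝ) < (n : ℝ) := by exact_mod_cast lt_of_lt_of_le h1 hn
  have hp := Real.rpow_pos_of_pos hn0 (1 + α)
  nlinarith [(hs n hn).1]

/-- ratio lemma: for fixed `j`, `K (n - j) / K n → 1`. -/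
theorem K_ratio (hcK : 0 < cK)
    (hKform : ∀ n : ℕ, 1 ≤ n → K n = L n / (n : ℝ) ^ (1 + α))
    (hL : Tendsto L atTop (nhds cK)) (hα : 0 < α) (j : ℕ) :
    Tendsto (fun n : ℕ => K (n - j) / K n) atTop (nhds 1) := by
  have hg := g_tendsto hcK hKform hL
  have hgj : Tendsto (fun n : ℕ => K (n - j) * ((n - j : ℕ) : ℝ) ^ (1 + α)) atTop (nhds cK) :=
    hg.comp (tendsto_sub_atTop_nat j)
  have h2 : Tendsto (fun n : ℕ => (K (n - j) * ((n - j : ℕ) : ℝ) ^ (1 + α))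
      / (K n * (n : ℝ) ^ (1 + α))) atTop (nhds 1) := by
    have := hgj.div hg (ne_of_gt hcK)
    rwa [div_self (ne_of_gt hcK)] at this
  have h3 : Tendsto (fun n : ℕ => ((n : ℝ) / ((n - j : ℕ) : ℝ)) ^ (1 + α)) atTop (nhds 1) := by
    have hb : Tendsto (fun n : ℕ => (n : ℝ) / ((n - j : ℕ) : ℝ)) atTop (nhds 1) := by
      have ha : Tendsto (fun n : ℕ => ((n - j : ℕ) : ℝ) / (n : ℝ)) atTop (nhds 1) := by
        have h0 : Tendsto (fun n : ℕ => 1 - (j : ℝ) / (n : ℝ)) atTop (nhds 1) := by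
          have := tendsto_const_div_atTop_nhds_zero_nat (j : ℝ)
          have := (tendsto_const_nhds (x := (1:ℝ)) (f := atTop)).sub this
          simpa using this
        apply h0.congr'
        filter_upwards [eventually_ge_atTop (j + 1)] with n hn
        have : ((n - j : ℕ) : ℝ) = (n : ℝ) - (j : ℝ) := by
          rw [Nat.cast_sub (by omega)]
        rw [this]
        have hn0 : (0 : ℝ) < (n : ℝ) := by exact_mod_cast (by omega : 0 < n)
        rw [sub_div, div_self (ne_of_gt hn0)]
      have := ha.inv₀ one_ne_zero
      simp only [inv_one] at this
      apply this.congr'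
      filter_upwards [eventually_ge_atTop (j + 1)] with n hn
      rw [inv_div]
    have := hb.rpow_const (p := 1 + α) (Or.inr (by linarith))
    rwa [Real.one_rpow] at this
  rcases K_sandwich hcK hKform hL with ⟨N₁, hN₁, hs⟩
  have heq : (fun n : ℕ => K (n - j) / K n)
      =ᶠ[atTop] fun n : ℕ => (K (n - j) * ((n - j : ℕ) : ℝ) ^ (1 + α)) / (K n * (n : ℝ) ^ (1 + α))
        * ((n : ℝ) / ((n - j : ℕ) : ℝ)) ^ (1 + α) := by
    filter_upwards [eventually_ge_atTop (N₁ + j)] with n hn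
    have hnj : N₁ ≤ n - j := by omega
    have hn1 : (0 : ℝ) < (n : ℝ) := by exact_mod_cast (by omega : 1 ≤ n)
    have hnj1 : (0 : ℝ) < ((n - j : ℕ) : ℝ) := by exact_mod_cast (by omega : 1 ≤ n - j)
    have hKn : 0 < K n := K_pos_of_sandwich hcK hN₁ hs (by omega)
    have hp1 := Real.rpow_pos_of_pos hn1 (1 + α)
    have hp2 := Real.rpow_pos_of_pos hnj1 (1 + α)
    rw [Real.div_rpow (le_of_lt hn1) (le_of_lt hnj1)]
    field_simp
  have := h2.mul h3
  rw [one_mul] at this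
  exact this.congr' heq.symm

end RenewalAux

namespace RenewalAux

variable {K : ℕ → ℝ} {α : ℝ} {cK : ℝ}

theorem K_half_bound (hα : 0 < α) (hcK : 0 < cK) {N₁ : ℕ} (hN₁ : 1 ≤ N₁)
    (hs : ∀ n, N₁ ≤ n → cK / 2 ≤ K n * (n : ℝ) ^ (1 + α) ∧ K n * (n : ℝ) ^ (1 + α) ≤ 2 * cK) :
    ∀ n, 2 * N₁ ≤ n → ∀ m, 2 * m ≤ n → K (n - m) ≤ (4 * (2 : ℝ) ^ (1 + α)) * K n := by
  intro n hn m hm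
  set p := 1 + α with hp
  have hnm : N₁ ≤ n - m := by omega
  have hnN : N₁ ≤ n := by omega
  set x := ((n - m : ℕ) : ℝ) with hx
  set y := ((n : ℕ) : ℝ) with hy
  have hx0 : (0 : ℝ) < x := by rw [hx]; exact_mod_cast (by omega : 0 < n - m)
  have hy0 : (0 : ℝ) < y := by rw [hy]; exact_mod_cast (by omega : 0 < n)
  have hxy : y / 2 ≤ x := by
    rw [div_le_iff₀ (by norm_num : (0:ℝ) < 2), hx, hy]
    exact_mod_cast (by omega : n ≤ (n - m) * 2)
  have hxp : 0 < x ^ p := Real.rpow_pos_of_pos hx0 p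
  have hyp : 0 < y ^ p := Real.rpow_pos_of_pos hy0 p
  have h2p : 0 < (2 : ℝ) ^ p := Real.rpow_pos_of_pos (by norm_num) p
  have e1 : K (n - m) ≤ 2 * cK / x ^ p := by
    rw [le_div_iff₀ hxp]; exact (hs _ hnm).2
  have e2 : y ^ p / 2 ^ p ≤ x ^ p := by
    rw [← Real.div_rpow (le_of_lt hy0) (by norm_num : (0:ℝ) ≤ 2)]
    exact Real.rpow_le_rpow (by positivity) hxy (by rw [hp]; linarith)
  have e3 : cK / 2 / y ^ p ≤ K n := by
    rw [div_le_iff₀ hyp]; exact (hs n hnN).1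
  have e4 : 2 * cK / x ^ p ≤ 2 * cK / (y ^ p / 2 ^ p) :=
    div_le_div_of_nonneg_left (by positivity) (by positivity) e2
  have e5 : 2 * cK / (y ^ p / 2 ^ p) = (4 * (2:ℝ) ^ p) * (cK / 2 / y ^ p) := by
    field_simp; ring
  calc K (n - m) ≤ 2 * cK / x ^ p := e1
    _ ≤ 2 * cK / (y ^ p / 2 ^ p) := e4
    _ = (4 * (2:ℝ) ^ p) * (cK / 2 / y ^ p) := e5
    _ ≤ (4 * (2:ℝ) ^ p) * K n := mul_le_mul_of_nonneg_left e3 (by positivity)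

theorem tail_summable (hKsummable : Summable fun n : ℕ => K (n + 1)) {a : ℕ} (ha : 1 ≤ a) :
    Summable fun i : ℕ => K (i + a) := by
  have := (summable_nat_add_iff (f := fun n : ℕ => K (n + 1)) (a - 1)).2 hKsummable
  apply this.congr
  intro i
  congr 1
  omega

theorem sum_Ico_le_tail (hKnn : ∀ n, 0 ≤ K n)
    (hKsummable : Summable fun n : ℕ => K (n + 1)) {a : ℕ} (ha : 1 ≤ a) (b : ℕ) :
    ∑ j ∈ Finset.Ico a b, K j ≤ ∑' i : ℕ, K (i + a) := by
  rw [Finset.sum_Ico_eq_sum_range]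
  have : ∀ i ∈ Finset.range (b - a), K (a + i) = K (i + a) := by
    intro i _; congr 1; omega
  rw [Finset.sum_congr rfl this]
  exact (tail_summable hKsummable ha).sum_le_tsum _ (fun i _ => hKnn _)

theorem tail_eq (hKsummable : Summable fun n : ℕ => K (n + 1)) {a : ℕ} (ha : 1 ≤ a) :
    ∑' i : ℕ, K (i + a) = (∑' n : ℕ, K (n + 1)) - ∑ m ∈ Finset.range (a - 1), K (m + 1) := by
  have h := Summable.sum_add_tsum_nat_add (f := fun n : ℕ => K (n + 1)) (a - 1) hKsummable
  have : ∀ i : ℕ, K (i + (a - 1) + 1) = K (i + a) := by intro i; congr 1; omega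
  rw [tsum_congr (fun i => (this i).symm)]
  linarith [h]

theorem tail_small (hKnn : ∀ n, 0 ≤ K n) (hKsummable : Summable fun n : ℕ => K (n + 1))
    {ε : ℝ} (hε : 0 < ε) :
    ∃ M : ℕ, 1 ≤ M ∧ ∀ a, M ≤ a → (∑' i : ℕ, K (i + a)) ≤ ε := by
  set s := ∑' n : ℕ, K (n + 1) with hs
  have hten := hKsummable.hasSum.tendsto_sum_nat
  have hev : ∀ᶠ k in atTop, s - ε ≤ ∑ i ∈ Finset.range k, K (i + 1) :=
    hten.eventually (eventually_ge_nhds (by linarith : s - ε < s))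
  rcases hev.exists_forall_of_atTop with ⟨M₀, hM₀⟩
  refine ⟨M₀ + 1, by omega, fun a ha => ?_⟩
  have ha1 : 1 ≤ a := by omega
  rw [tail_eq hKsummable ha1]
  have := hM₀ (a - 1) (by omega)
  linarith

theorem sum_Ico_one_eq (K : ℕ → ℝ) (M : ℕ) :
    ∑ m ∈ Finset.Ico 1 (M + 1), K m = ∑ m ∈ Finset.range M, K (m + 1) := by
  rw [Finset.sum_Ico_eq_sum_range]
  simp only [Nat.add_sub_cancel]
  exact Finset.sum_congr rfl fun i _ => by rw [add_comm]

theorem sum_Ico_one_le (hKnn : ∀ n, 0 ≤ K n)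
    (hKsummable : Summable fun n : ℕ => K (n + 1)) (b : ℕ) :
    ∑ m ∈ Finset.Ico 1 b, K m ≤ ∑' n : ℕ, K (n + 1) := by
  rw [Finset.sum_Ico_eq_sum_range]
  have : ∀ i ∈ Finset.range (b - 1), K (1 + i) = K (i + 1) := fun i _ => by rw [add_comm]
  rw [Finset.sum_congr rfl this]
  exact hKsummable.sum_le_tsum _ (fun i _ => hKnn _)

end RenewalAux

namespace RenewalAux

variable {K : ℕ → ℝ} {α : ℝ} {L : ℕ → ℝ} {cK : ℝ}

/-- eventually, `K (n - m) ≤ c * K n` for all `m ∈ [1, M]`. -/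
theorem ratio_ev (hcK : 0 < cK)
    (hKform : ∀ n : ℕ, 1 ≤ n → K n = L n / (n : ℝ) ^ (1 + α))
    (hL : Tendsto L atTop (nhds cK)) (hα : 0 < α) (M : ℕ) {c : ℝ} (hc : 1 < c) :
    ∀ᶠ n in atTop, ∀ m ∈ Finset.Icc 1 M, K (n - m) ≤ c * K n := by
  rcases K_sandwich hcK hKform hL with ⟨N₁, hN₁, hsand⟩
  rw [eventually_all_finset]
  intro m hm
  have h1 : ∀ᶠ n in atTop, K (n - m) / K n ≤ c :=
    (K_ratio hcK hKform hL hα m).eventually (eventually_le_nhds hc)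
  filter_upwards [h1, eventually_ge_atTop N₁] with n hn hn'
  have hKn : 0 < K n := K_pos_of_sandwich hcK hN₁ hsand hn'
  rw [div_le_iff₀ hKn] at hn
  exact hn

/-- similarly from below. -/
theorem ratio_ev_lower (hcK : 0 < cK)
    (hKform : ∀ n : ℕ, 1 ≤ n → K n = L n / (n : ℝ) ^ (1 + α))
    (hL : Tendsto L atTop (nhds cK)) (hα : 0 < α) (M : ℕ) {c : ℝ} (hc : c < 1) :
    ∀ᶠ n in atTop, ∀ m ∈ Finset.Icc 1 M, c * K n ≤ K (n - m) := by
  rcases K_sandwich hcK hKform hL with ⟨N₁, hN₁, hsand⟩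
  rw [eventually_all_finset]
  intro m hm
  have h1 : ∀ᶠ n in atTop, c ≤ K (n - m) / K n :=
    (K_ratio hcK hKform hL hα m).eventually (eventually_ge_nhds hc)
  filter_upwards [h1, eventually_ge_atTop N₁] with n hn hn'
  have hKn : 0 < K n := K_pos_of_sandwich hcK hN₁ hsand hn'
  rw [le_div_iff₀ hKn] at hn
  exact hn

theorem conv_small
    (hKnn : ∀ n, 0 ≤ K n) (hKsummable : Summable fun n : ℕ => K (n + 1))
    (hα : 0 < α) (hcK : 0 < cK)
    (hKform : ∀ n : ℕ, 1 ≤ n → K n = L n / (n : ℝ) ^ (1 + α))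
    (hL : Tendsto L atTop (nhds cK))
    {ε : ℝ} (hε : 0 < ε) (M₀ : ℕ) :
    ∃ n₀ : ℕ, 1 ≤ n₀ ∧ M₀ ≤ n₀ ∧ ∃ N : ℕ, ∀ n, N ≤ n →
      ∑ j ∈ Finset.Ico n₀ n, K (n - j) * K j ≤ ((∑' m : ℕ, K (m + 1)) + ε) * K n := by
  classical
  set s := ∑' m : ℕ, K (m + 1) with hsdef
  have hs0 : 0 ≤ s := tsum_nonneg fun n => hKnn _
  set C := 4 * (2 : ℝ) ^ (1 + α) with hC
  have hC0 : 0 < C := by positivity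
  rcases K_sandwich hcK hKform hL with ⟨N₁, hN₁, hsand⟩
  have HB := K_half_bound hα hcK hN₁ hsand
  rcases tail_small hKnn hKsummable (show (0:ℝ) < ε / 4 / C by positivity) with ⟨M₁, hM₁, hT⟩
  set ε₂ := ε / (2 * (s + 1)) with hε₂
  have hε₂0 : 0 < ε₂ := by positivity
  set n₀ := M₀ + M₁ + N₁ + 1 with hn₀
  have hub := ratio_ev hcK hKform hL hα n₀ (show (1:ℝ) < 1 + ε₂ by linarith)
  rcases ((hub.and (eventually_ge_atTop (4 * n₀ + 4 + 2 * N₁))).exists_forall_of_atTop)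
    with ⟨N, hN⟩
  refine ⟨n₀, by omega, by omega, N, fun n hn => ?_⟩
  obtain ⟨hratio, hbig⟩ := hN n hn
  have hn2N₁ : 2 * N₁ ≤ n := by omega
  have hKn0 : 0 ≤ K n := hKnn n
  set h := n / 2 + 1 with hhalf
  have hsplit1 : n₀ ≤ h := by omega
  have hsplit2 : h ≤ n - n₀ := by omega
  have hsplit3 : n - n₀ ≤ n := by omega
  rw [← Finset.sum_Ico_consecutive _ hsplit1 (le_trans hsplit2 hsplit3),
      ← Finset.sum_Ico_consecutive _ hsplit2 hsplit3]
  -- P1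
  have P1 : ∑ j ∈ Finset.Ico n₀ h, K (n - j) * K j ≤ (ε / 4) * K n := by
    have step : ∀ j ∈ Finset.Ico n₀ h, K (n - j) * K j ≤ (C * K n) * K j := by
      intro j hj
      simp only [Finset.mem_Ico] at hj
      exact mul_le_mul_of_nonneg_right (HB n hn2N₁ j (by omega)) (hKnn j)
    calc ∑ j ∈ Finset.Ico n₀ h, K (n - j) * K j ≤ ∑ j ∈ Finset.Ico n₀ h, (C * K n) * K j :=
          Finset.sum_le_sum step
      _ = (C * K n) * ∑ j ∈ Finset.Ico n₀ h, K j := by rw [Finset.mul_sum]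
      _ ≤ (C * K n) * (ε / 4 / C) := by
          apply mul_le_mul_of_nonneg_left _ (by positivity)
          exact le_trans (sum_Ico_le_tail hKnn hKsummable (by omega) h) (hT n₀ (by omega))
      _ ≤ (ε / 4) * K n := by
          rw [mul_comm C (K n), mul_assoc]
          have hCe : C * (ε / 4 / C) = ε / 4 := by field_simp
          rw [hCe, mul_comm]
  -- P2
  have P2 : ∑ j ∈ Finset.Ico h (n - n₀), K (n - j) * K j ≤ (ε / 4) * K n := by
    have step : ∀ j ∈ Finset.Ico h (n - n₀), K (n - j) * K j ≤ K (n - j) * (C * K n) := by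
      intro j hj
      simp only [Finset.mem_Ico] at hj
      have : K j = K (n - (n - j)) := by congr 1; omega
      rw [this]
      exact mul_le_mul_of_nonneg_left (HB n hn2N₁ (n - j) (by omega)) (hKnn _)
    calc ∑ j ∈ Finset.Ico h (n - n₀), K (n - j) * K j
        ≤ ∑ j ∈ Finset.Ico h (n - n₀), K (n - j) * (C * K n) := Finset.sum_le_sum step
      _ = (∑ j ∈ Finset.Ico h (n - n₀), K (n - j)) * (C * K n) := by rw [Finset.sum_mul]
      _ ≤ (ε / 4 / C) * (C * K n) := by
          apply mul_le_mul_of_nonneg_right _ (by positivity)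
          rw [Finset.sum_Ico_reflect _ _ (by omega)]
          calc ∑ j ∈ Finset.Ico (n + 1 - (n - n₀)) (n + 1 - h), K j
              ≤ ∑' i : ℕ, K (i + (n + 1 - (n - n₀))) :=
              sum_Ico_le_tail hKnn hKsummable (by omega) _
            _ ≤ ε / 4 / C := hT _ (by omega)
      _ = (ε / 4) * K n := by field_simp
  -- P3
  have P3 : ∑ j ∈ Finset.Ico (n - n₀) n, K (n - j) * K j ≤ ((1 + ε₂) * s) * K n := by
    have step : ∀ j ∈ Finset.Ico (n - n₀) n, K (n - j) * K j ≤ K (n - j) * ((1 + ε₂) * K n) := by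
      intro j hj
      simp only [Finset.mem_Ico] at hj
      have hj' : K j = K (n - (n - j)) := by congr 1; omega
      rw [hj']
      refine mul_le_mul_of_nonneg_left ?_ (hKnn _)
      exact hratio (n - j) (by simp only [Finset.mem_Icc]; omega)
    calc ∑ j ∈ Finset.Ico (n - n₀) n, K (n - j) * K j
        ≤ ∑ j ∈ Finset.Ico (n - n₀) n, K (n - j) * ((1 + ε₂) * K n) := Finset.sum_le_sum step
      _ = (∑ j ∈ Finset.Ico (n - n₀) n, K (n - j)) * ((1 + ε₂) * K n) := by rw [Finset.sum_mul]
      _ ≤ s * ((1 + ε₂) * K n) := by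
          apply mul_le_mul_of_nonneg_right _ (by positivity)
          rw [Finset.sum_Ico_reflect _ _ (by omega)]
          have e1 : n + 1 - (n - n₀) = n₀ + 1 := by omega
          have e2 : n + 1 - n = 1 := by omega
          rw [e1, e2]  -- wrong order?
          exact sum_Ico_one_le hKnn hKsummable _
      _ = ((1 + ε₂) * s) * K n := by ring
  have hbudget : (1 + ε₂) * s ≤ s + ε / 2 := by
    have : ε₂ * s ≤ ε / 2 := by
      rw [hε₂]
      rw [div_mul_eq_mul_div, div_le_div_iff₀ (by positivity) (by norm_num)]
      nlinarith
    nlinarith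
  have := add_le_add (add_le_add P1 P2) P3
  nlinarith [this]

end RenewalAux

namespace RenewalAux

variable {K : ℕ → ℝ} {α : ℝ} {L : ℕ → ℝ} {cK : ℝ}

theorem u_bounded
    (hKnn : ∀ n, 0 ≤ K n) (hKsummable : Summable fun n : ℕ => K (n + 1))
    (hterm : 0 < 1 - ∑' n : ℕ, K (n + 1))
    (hα : 0 < α) (hcK : 0 < cK)
    (hKform : ∀ n : ℕ, 1 ≤ n → K n = L n / (n : ℝ) ^ (1 + α))
    (hL : Tendsto L atTop (nhds cK)) :
    ∃ B : ℝ, 0 ≤ B ∧ ∃ n₀ : ℕ, 1 ≤ n₀ ∧ (∀ n, n₀ ≤ n → 0 < K n) ∧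
      ∀ n, n₀ ≤ n → renewalMass K n ≤ B * K n := by
  classical
  set s := ∑' m : ℕ, K (m + 1) with hsdef
  have hs0 : 0 ≤ s := tsum_nonneg fun n => hKnn _
  set θ := s + (1 - s) / 2 with hθ
  have hθ1 : θ < 1 := by rw [hθ]; linarith
  have hθ0 : 0 ≤ θ := by rw [hθ]; linarith
  set C := 4 * (2 : ℝ) ^ (1 + α) with hC
  have hC0 : 0 < C := by positivity
  rcases K_sandwich hcK hKform hL with ⟨N₁, hN₁, hsand⟩
  have HB := K_half_bound hα hcK hN₁ hsand
  rcases conv_small hKnn hKsummable hα hcK hKform hL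
    (show (0:ℝ) < (1 - s) / 2 by linarith) N₁ with ⟨n₀, hn₀1, hn₀N₁, N, hconv⟩
  have hKpos : ∀ n, n₀ ≤ n → 0 < K n := fun n hn =>
    K_pos_of_sandwich hcK hN₁ hsand (le_trans hn₀N₁ hn)
  set N' := N + 2 * n₀ + 2 * N₁ + 1 with hN'
  set D := C * (1 - s)⁻¹ with hD
  have hD0 : 0 ≤ D := by
    have : 0 < (1 - s)⁻¹ := by positivity
    positivity
  have hne : (Finset.Icc n₀ N').Nonempty := by
    refine ⟨n₀, ?_⟩; simp only [Finset.mem_Icc]; omega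
  set B₀ := (Finset.Icc n₀ N').sup' hne fun k => renewalMass K k / K k with hB₀
  set B := max (max B₀ 0) (D / ((1 - s) / 2)) with hB
  have hBnn : 0 ≤ B := le_trans (le_max_right _ _) (le_max_left _ _)
  refine ⟨B, hBnn, n₀, hn₀1, hKpos, ?_⟩
  intro n hn
  induction n using Nat.strong_induction_on with
  | _ n ih =>
    by_cases hsmall : n ≤ N'
    · have hmem : n ∈ Finset.Icc n₀ N' := by simp only [Finset.mem_Icc]; exact ⟨hn, hsmall⟩
      have h1 : renewalMass K n / K n ≤ B₀ := Finset.le_sup' (fun k => renewalMass K k / K k) hmem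
      have hKn := hKpos n hn
      have : renewalMass K n / K n ≤ B :=
        le_trans h1 (le_trans (le_max_left _ _) (le_max_left _ _))
      rw [div_le_iff₀ hKn] at this
      linarith
    · push_neg at hsmall
      obtain ⟨m, rfl⟩ : ∃ m, n = m + 1 := ⟨n - 1, by omega⟩
      set n := m + 1
      have hbig : N' < n := hsmall
      have hrec := u_rec K m
      have hKn := hKpos n hn
      rw [hrec]
      have hsplit : Finset.range n = Finset.Ico 0 n := by rw [Finset.range_eq_Ico]
      rw [hsplit, ← Finset.sum_Ico_consecutive _ (by omega : 0 ≤ n₀) (by omega : n₀ ≤ n)]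
      have part0 : ∑ j ∈ Finset.Ico 0 n₀, K (n - j) * renewalMass K j ≤ D * K n := by
        have step : ∀ j ∈ Finset.Ico 0 n₀, K (n - j) * renewalMass K j
            ≤ (C * K n) * renewalMass K j := by
          intro j hj
          simp only [Finset.mem_Ico] at hj
          exact mul_le_mul_of_nonneg_right (HB n (by omega) j (by omega)) (u_nonneg hKnn j)
        calc ∑ j ∈ Finset.Ico 0 n₀, K (n - j) * renewalMass K j
            ≤ ∑ j ∈ Finset.Ico 0 n₀, (C * K n) * renewalMass K j := Finset.sum_le_sum step
          _ = (C * K n) * ∑ j ∈ Finset.Ico 0 n₀, renewalMass K j := by rw [Finset.mul_sum]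
          _ ≤ (C * K n) * (1 - s)⁻¹ := by
              apply mul_le_mul_of_nonneg_left _ (by positivity)
              rw [← Finset.range_eq_Ico]
              exact S_le hKnn hKsummable hterm n₀
          _ = D * K n := by rw [hD]; ring
      have part1 : ∑ j ∈ Finset.Ico n₀ n, K (n - j) * renewalMass K j ≤ B * θ * K n := by
        have step : ∀ j ∈ Finset.Ico n₀ n, K (n - j) * renewalMass K j
            ≤ K (n - j) * (B * K j) := by
          intro j hj
          simp only [Finset.mem_Ico] at hj
          have := ih j (by omega) hj.1
          exact mul_le_mul_of_nonneg_left (by rwa [mul_comm B (K j)] at this ⊢) (hKnn _)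
        calc ∑ j ∈ Finset.Ico n₀ n, K (n - j) * renewalMass K j
            ≤ ∑ j ∈ Finset.Ico n₀ n, K (n - j) * (B * K j) := Finset.sum_le_sum step
          _ = B * ∑ j ∈ Finset.Ico n₀ n, K (n - j) * K j := by
              rw [Finset.mul_sum]; apply Finset.sum_congr rfl; intro j _; ring
          _ ≤ B * (θ * K n) := by
              apply mul_le_mul_of_nonneg_left _ hBnn
              have := hconv n (by omega)
              rw [hθ]
              exact this
          _ = B * θ * K n := by ring
      have hDB : D ≤ ((1 - s) / 2) * B := by
        have h1 : D / ((1 - s) / 2) ≤ B := le_max_right _ _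
        rw [div_le_iff₀ (by linarith : (0:ℝ) < (1 - s) / 2)] at h1
        linarith
      have hfin : D * K n + B * θ * K n ≤ B * K n := by
        have h2 : D * K n ≤ (1 - s) / 2 * B * K n :=
          by nlinarith [mul_le_mul_of_nonneg_right hDB (le_of_lt hKn)]
        have h3 : B * θ * K n = B * K n - (1 - s) / 2 * B * K n := by rw [hθ]; ring
        clear_value s θ D B
        linarith
      calc ∑ j ∈ Finset.Ico 0 n₀, K (n - j) * renewalMass K j
            + ∑ j ∈ Finset.Ico n₀ n, K (n - j) * renewalMass K j
          ≤ D * K n + B * θ * K n := add_le_add part0 part1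
        _ ≤ B * K n := hfin

end RenewalAux

namespace RenewalAux

variable {K : ℕ → ℝ} {α : ℝ} {L : ℕ → ℝ} {cK : ℝ}

theorem E1
    (hKnn : ∀ n, 0 ≤ K n) (hKsummable : Summable fun n : ℕ => K (n + 1))
    (hKsum : ∑' n : ℕ, K (n + 1) ≤ 1)
    (hterm : 0 < 1 - ∑' n : ℕ, K (n + 1))
    (hα : 0 < α) (hcK : 0 < cK)
    (hKform : ∀ n : ℕ, 1 ≤ n → K n = L n / (n : ℝ) ^ (1 + α))
    (hL : Tendsto L atTop (nhds cK))
    {B : ℝ} (hB0 : 0 ≤ B) {n₀ : ℕ} (hn₀1 : 1 ≤ n₀)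
    (hKpos : ∀ n, n₀ ≤ n → 0 < K n)
    (hBnd : ∀ n, n₀ ≤ n → renewalMass K n ≤ B * K n)
    {x : ℝ} (hx0 : 0 ≤ x)
    (hev : ∀ η, 0 < η → ∀ᶠ k in atTop, renewalMass K k / K k ≤ x + η)
    {ε : ℝ} (hε : 0 < ε) :
    ∀ᶠ n in atTop, renewalMass K n / K n
      ≤ (∑' k : ℕ, renewalMass K k) + (∑' m : ℕ, K (m + 1)) * x + ε := by
  classical
  set s := ∑' m : ℕ, K (m + 1) with hsdef
  have hs0 : 0 ≤ s := tsum_nonneg fun n => hKnn _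
  set U := ∑' k : ℕ, renewalMass K k with hUdef
  have hUsum := u_summable hKnn hKsummable hterm
  have hU0 : 0 ≤ U := tsum_nonneg fun n => u_nonneg hKnn n
  set C := 4 * (2 : ℝ) ^ (1 + α) with hC
  have hC0 : 0 < C := by positivity
  rcases K_sandwich hcK hKform hL with ⟨N₁, hN₁, hsand⟩
  have HB := K_half_bound hα hcK hN₁ hsand
  -- small quantities
  set τ := ε / (4 * (C * B + 1)) with hτ
  have hτ0 : 0 < τ := by positivity
  set η := min 1 (ε / (2 * (U + x + 3))) with hη
  have hη0 : 0 < η := lt_min one_pos (by positivity)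
  have hη1 : η ≤ 1 := min_le_left _ _
  have hηε : η * (U + x + 2) ≤ ε / 2 := by
    have h1 : η ≤ ε / (2 * (U + x + 3)) := min_le_right _ _
    have h2 : η * (U + x + 2) ≤ (ε / (2 * (U + x + 3))) * (U + x + 2) :=
      mul_le_mul_of_nonneg_right h1 (by linarith)
    have h3 : (ε / (2 * (U + x + 3))) * (U + x + 2) ≤ ε / 2 := by
      rw [div_mul_eq_mul_div, div_le_div_iff₀ (by positivity) (by norm_num)]
      nlinarith
    linarith
  rcases tail_small hKnn hKsummable hτ0 with ⟨M₁, hM₁, hT⟩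
  set M := M₁ with hM
  set M₂ := M₁ + n₀ + 1 with hM₂
  rcases eventually_atTop.1 (hev η hη0) with ⟨Na, hNa⟩
  rcases eventually_atTop.1
    (ratio_ev hcK hKform hL hα (max M₂ M) (show (1:ℝ) < 1 + η by linarith)) with ⟨Nr, hNr⟩
  filter_upwards [eventually_ge_atTop
    (Nr + Na + 2 * M₂ + 2 * M + 2 * n₀ + 2 * N₁ + 8)] with n hnb
  obtain ⟨m, rfl⟩ : ∃ m, n = m + 1 := ⟨n - 1, by omega⟩
  set n := m + 1 with hn
  have hKn : 0 < K n := hKpos n (by omega)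
  have hratio : ∀ j ∈ Finset.Icc 1 (max M₂ M), K (n - j) ≤ (1 + η) * K n :=
    hNr n (by omega)
  rw [div_le_iff₀ hKn]
  have hrec := u_rec K m
  rw [hrec]
  set half := n / 2 + 1 with hhalf
  rw [Finset.range_eq_Ico,
      ← Finset.sum_Ico_consecutive _ (by omega : 0 ≤ M₂) (by omega : M₂ ≤ n),
      ← Finset.sum_Ico_consecutive _ (by omega : M₂ ≤ half) (by omega : half ≤ n),
      ← Finset.sum_Ico_consecutive _ (by omega : half ≤ n - M) (by omega : n - M ≤ n)]
  have T1 : ∑ j ∈ Finset.Ico 0 M₂, K (n - j) * renewalMass K j ≤ ((1 + η) * U) * K n := by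
    have step : ∀ j ∈ Finset.Ico 0 M₂, K (n - j) * renewalMass K j
        ≤ ((1 + η) * K n) * renewalMass K j := by
      intro j hj
      simp only [Finset.mem_Ico] at hj
      apply mul_le_mul_of_nonneg_right _ (u_nonneg hKnn j)
      rcases Nat.eq_zero_or_pos j with h0 | h0
      · subst h0; simp only [Nat.sub_zero]; nlinarith
      · exact hratio j (by simp only [Finset.mem_Icc]; omega)
    calc ∑ j ∈ Finset.Ico 0 M₂, K (n - j) * renewalMass K j
        ≤ ∑ j ∈ Finset.Ico 0 M₂, ((1 + η) * K n) * renewalMass K j := Finset.sum_le_sum step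
      _ = ((1 + η) * K n) * ∑ j ∈ Finset.Ico 0 M₂, renewalMass K j := by rw [Finset.mul_sum]
      _ ≤ ((1 + η) * K n) * U := by
          apply mul_le_mul_of_nonneg_left _ (by positivity)
          rw [← Finset.range_eq_Ico]
          exact hUsum.sum_le_tsum _ (fun k _ => u_nonneg hKnn k)
      _ = ((1 + η) * U) * K n := by ring
  have T2a : ∑ j ∈ Finset.Ico M₂ half, K (n - j) * renewalMass K j ≤ (C * B * τ) * K n := by
    have step : ∀ j ∈ Finset.Ico M₂ half, K (n - j) * renewalMass K j
        ≤ (C * K n) * (B * K j) := by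
      intro j hj
      simp only [Finset.mem_Ico] at hj
      have h1 : K (n - j) ≤ C * K n := HB n (by omega) j (by omega)
      have h2 : renewalMass K j ≤ B * K j := hBnd j (by omega)
      exact mul_le_mul h1 h2 (u_nonneg hKnn j) (by positivity)
    calc ∑ j ∈ Finset.Ico M₂ half, K (n - j) * renewalMass K j
        ≤ ∑ j ∈ Finset.Ico M₂ half, (C * K n) * (B * K j) := Finset.sum_le_sum step
      _ = (C * K n * B) * ∑ j ∈ Finset.Ico M₂ half, K j := by
          rw [Finset.mul_sum]; apply Finset.sum_congr rfl; intro j _; ring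
      _ ≤ (C * K n * B) * τ := by
          apply mul_le_mul_of_nonneg_left _ (by positivity)
          exact le_trans (sum_Ico_le_tail hKnn hKsummable (by omega) half) (hT M₂ (by omega))
      _ = (C * B * τ) * K n := by ring
  have T2b : ∑ j ∈ Finset.Ico half (n - M), K (n - j) * renewalMass K j
      ≤ (C * B * τ) * K n := by
    have step : ∀ j ∈ Finset.Ico half (n - M), K (n - j) * renewalMass K j
        ≤ K (n - j) * (B * (C * K n)) := by
      intro j hj
      simp only [Finset.mem_Ico] at hj
      have h2 : renewalMass K j ≤ B * K j := hBnd j (by omega)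
      have h1 : K j ≤ C * K n := by
        have : K j = K (n - (n - j)) := by congr 1; omega
        rw [this]
        exact HB n (by omega) (n - j) (by omega)
      apply mul_le_mul_of_nonneg_left _ (hKnn _)
      calc renewalMass K j ≤ B * K j := h2
        _ ≤ B * (C * K n) := mul_le_mul_of_nonneg_left h1 hB0
    calc ∑ j ∈ Finset.Ico half (n - M), K (n - j) * renewalMass K j
        ≤ ∑ j ∈ Finset.Ico half (n - M), K (n - j) * (B * (C * K n)) := Finset.sum_le_sum step
      _ = (∑ j ∈ Finset.Ico half (n - M), K (n - j)) * (B * (C * K n)) := by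
          rw [Finset.sum_mul]
      _ ≤ τ * (B * (C * K n)) := by
          apply mul_le_mul_of_nonneg_right _ (by positivity)
          rw [Finset.sum_Ico_reflect _ _ (by omega)]
          calc ∑ j ∈ Finset.Ico (n + 1 - (n - M)) (n + 1 - half), K j
              ≤ ∑' i : ℕ, K (i + (n + 1 - (n - M))) :=
                sum_Ico_le_tail hKnn hKsummable (by omega) _
            _ ≤ τ := hT _ (by omega)
      _ = (C * B * τ) * K n := by ring
  have T3 : ∑ j ∈ Finset.Ico (n - M) n, K (n - j) * renewalMass K j
      ≤ (s * ((x + η) * (1 + η))) * K n := by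
    have step : ∀ j ∈ Finset.Ico (n - M) n, K (n - j) * renewalMass K j
        ≤ K (n - j) * (((x + η) * (1 + η)) * K n) := by
      intro j hj
      simp only [Finset.mem_Ico] at hj
      apply mul_le_mul_of_nonneg_left _ (hKnn _)
      have hKj : 0 < K j := hKpos j (by omega)
      have hρ : renewalMass K j / K j ≤ x + η := hNa j (by omega)
      rw [div_le_iff₀ hKj] at hρ
      have hKjb : K j ≤ (1 + η) * K n := by
        have : K j = K (n - (n - j)) := by congr 1; omega
        rw [this]
        exact hratio (n - j) (by simp only [Finset.mem_Icc]; omega)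
      calc renewalMass K j ≤ (x + η) * K j := hρ
        _ ≤ (x + η) * ((1 + η) * K n) := mul_le_mul_of_nonneg_left hKjb (by linarith)
        _ = ((x + η) * (1 + η)) * K n := by ring
    calc ∑ j ∈ Finset.Ico (n - M) n, K (n - j) * renewalMass K j
        ≤ ∑ j ∈ Finset.Ico (n - M) n, K (n - j) * (((x + η) * (1 + η)) * K n) :=
          Finset.sum_le_sum step
      _ = (∑ j ∈ Finset.Ico (n - M) n, K (n - j)) * (((x + η) * (1 + η)) * K n) := by
          rw [Finset.sum_mul]
      _ ≤ s * (((x + η) * (1 + η)) * K n) := by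
          apply mul_le_mul_of_nonneg_right _ (by positivity)
          rw [Finset.sum_Ico_reflect _ _ (by omega)]
          have e1 : n + 1 - (n - M) = M + 1 := by omega
          have e2 : n + 1 - n = 1 := by omega
          rw [e1, e2]
          exact sum_Ico_one_le hKnn hKsummable _
      _ = (s * ((x + η) * (1 + η))) * K n := by ring
  have total := add_le_add (add_le_add (add_le_add T1 T2a) T2b) T3
  have harith : ((1 + η) * U) * K n + (C * B * τ) * K n + (C * B * τ) * K n
      + (s * ((x + η) * (1 + η))) * K n ≤ (U + s * x + ε) * K n := by
    have hfac : (1 + η) * U + C * B * τ + C * B * τ + s * ((x + η) * (1 + η))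
        ≤ U + s * x + ε := by
      have hτb : 2 * (C * B) * τ ≤ ε / 2 := by
        rw [hτ, ← mul_div_assoc, div_le_div_iff₀ (by positivity) (by norm_num)]
        nlinarith [mul_nonneg (le_of_lt hC0) hB0, le_of_lt hε,
          mul_nonneg (mul_nonneg (le_of_lt hC0) hB0) (le_of_lt hε)]
      have hsx : s * ((x + η) * (1 + η)) ≤ s * x + η * (x + 2) := by
        have e : (x + η) * (1 + η) = x + η * (x + 1 + η) := by ring
        rw [e, mul_add]
        have h1 : s * (η * (x + 1 + η)) ≤ η * (x + 2) := by
          have h2 : η * (x + 1 + η) ≤ η * (x + 2) :=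
            mul_le_mul_of_nonneg_left (by linarith) (le_of_lt hη0)
          nlinarith [mul_nonneg (le_of_lt hη0) (show (0:ℝ) ≤ x + 1 + η by linarith), hKsum, hs0]
        linarith
      nlinarith [hηε, hsx, hτb]
    linarith [mul_le_mul_of_nonneg_right hfac (le_of_lt hKn)]
  linarith

end RenewalAux

namespace RenewalAux

variable {K : ℕ → ℝ} {α : ℝ} {L : ℕ → ℝ} {cK : ℝ}

theorem E0
    (hKnn : ∀ n, 0 ≤ K n) (hKsummable : Summable fun n : ℕ => K (n + 1))
    (hterm : 0 < 1 - ∑' n : ℕ, K (n + 1))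
    (hα : 0 < α) (hcK : 0 < cK)
    (hKform : ∀ n : ℕ, 1 ≤ n → K n = L n / (n : ℝ) ^ (1 + α))
    (hL : Tendsto L atTop (nhds cK))
    {n₀ : ℕ} (hKpos : ∀ n, n₀ ≤ n → 0 < K n)
    {ε : ℝ} (hε : 0 < ε) :
    ∀ᶠ n in atTop, (∑' k : ℕ, renewalMass K k) - ε ≤ renewalMass K n / K n := by
  classical
  set U := ∑' k : ℕ, renewalMass K k with hUdef
  have hUsum := u_summable hKnn hKsummable hterm
  have hU0 : 0 ≤ U := tsum_nonneg fun n => u_nonneg hKnn n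
  set η := min 1 (ε / (2 * (U + 1))) with hη
  have hη0 : 0 < η := lt_min one_pos (by positivity)
  have hη1 : η ≤ 1 := min_le_left _ _
  have hηε : η * U ≤ ε / 2 := by
    have h1 : η ≤ ε / (2 * (U + 1)) := min_le_right _ _
    have h2 : η * U ≤ (ε / (2 * (U + 1))) * U :=
      mul_le_mul_of_nonneg_right h1 hU0
    have h3 : (ε / (2 * (U + 1))) * U ≤ ε / 2 := by
      rw [div_mul_eq_mul_div, div_le_div_iff₀ (by positivity) (by norm_num)]
      nlinarith
    linarith
  rcases (hUsum.hasSum.tendsto_sum_nat.eventually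
    (eventually_ge_nhds (by linarith : U - ε / 2 < U))).exists_forall_of_atTop with ⟨M₀, hM₀⟩
  set M₂ := M₀ + 1 with hM₂
  rcases eventually_atTop.1
    (ratio_ev_lower hcK hKform hL hα M₂ (show 1 - η < (1:ℝ) by linarith)) with ⟨Nr, hNr⟩
  filter_upwards [eventually_ge_atTop (Nr + 2 * M₂ + 2 * n₀ + 2)] with n hnb
  obtain ⟨m, rfl⟩ : ∃ m, n = m + 1 := ⟨n - 1, by omega⟩
  set n := m + 1 with hn
  have hKn : 0 < K n := hKpos n (by omega)
  have hratio : ∀ j ∈ Finset.Icc 1 M₂, (1 - η) * K n ≤ K (n - j) := hNr n (by omega)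
  rw [le_div_iff₀ hKn]
  have hrec := u_rec K m
  rw [hrec, Finset.range_eq_Ico,
      ← Finset.sum_Ico_consecutive _ (by omega : 0 ≤ M₂) (by omega : M₂ ≤ n)]
  have T1 : ((1 - η) * (U - ε / 2)) * K n
      ≤ ∑ j ∈ Finset.Ico 0 M₂, K (n - j) * renewalMass K j := by
    have step : ∀ j ∈ Finset.Ico 0 M₂, ((1 - η) * K n) * renewalMass K j
        ≤ K (n - j) * renewalMass K j := by
      intro j hj
      simp only [Finset.mem_Ico] at hj
      apply mul_le_mul_of_nonneg_right _ (u_nonneg hKnn j)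
      rcases Nat.eq_zero_or_pos j with h0 | h0
      · subst h0; simp only [Nat.sub_zero]; nlinarith
      · exact hratio j (by simp only [Finset.mem_Icc]; omega)
    have hpartial : U - ε / 2 ≤ ∑ j ∈ Finset.Ico 0 M₂, renewalMass K j := by
      rw [← Finset.range_eq_Ico]
      exact hM₀ M₂ (by omega)
    calc ((1 - η) * (U - ε / 2)) * K n = ((1 - η) * K n) * (U - ε / 2) := by ring
      _ ≤ ((1 - η) * K n) * ∑ j ∈ Finset.Ico 0 M₂, renewalMass K j := by
          apply mul_le_mul_of_nonneg_left hpartial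
          have : (0:ℝ) ≤ 1 - η := by linarith
          positivity
      _ = ∑ j ∈ Finset.Ico 0 M₂, ((1 - η) * K n) * renewalMass K j := by rw [Finset.mul_sum]
      _ ≤ ∑ j ∈ Finset.Ico 0 M₂, K (n - j) * renewalMass K j := Finset.sum_le_sum step
  have T2 : (0:ℝ) ≤ ∑ j ∈ Finset.Ico M₂ n, K (n - j) * renewalMass K j :=
    Finset.sum_nonneg fun j _ => mul_nonneg (hKnn _) (u_nonneg hKnn j)
  have harith : (U - ε) * K n ≤ ((1 - η) * (U - ε / 2)) * K n := by
    apply mul_le_mul_of_nonneg_right _ (le_of_lt hKn)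
    nlinarith [hηε, mul_nonneg (le_of_lt hη0) (le_of_lt hε)]
  linarith

end RenewalAux

namespace RenewalAux

variable {K : ℕ → ℝ} {α : ℝ} {L : ℕ → ℝ} {cK : ℝ}

theorem E2
    (hKnn : ∀ n, 0 ≤ K n) (hKsummable : Summable fun n : ℕ => K (n + 1))
    (hKsum : ∑' n : ℕ, K (n + 1) ≤ 1)
    (hterm : 0 < 1 - ∑' n : ℕ, K (n + 1))
    (hα : 0 < α) (hcK : 0 < cK)
    (hKform : ∀ n : ℕ, 1 ≤ n → K n = L n / (n : ℝ) ^ (1 + α))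
    (hL : Tendsto L atTop (nhds cK))
    {n₀ : ℕ} (hKpos : ∀ n, n₀ ≤ n → 0 < K n)
    {x : ℝ} (hx1 : 1 ≤ x)
    (hev : ∀ η, 0 < η → ∀ᶠ k in atTop, x - η ≤ renewalMass K k / K k)
    {ε : ℝ} (hε : 0 < ε) :
    ∀ᶠ n in atTop, (∑' k : ℕ, renewalMass K k) + (∑' m : ℕ, K (m + 1)) * x - ε
      ≤ renewalMass K n / K n := by
  classical
  set s := ∑' m : ℕ, K (m + 1) with hsdef
  have hs0 : 0 ≤ s := tsum_nonneg fun n => hKnn _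
  set U := ∑' k : ℕ, renewalMass K k with hUdef
  have hUsum := u_summable hKnn hKsummable hterm
  have hU0 : 0 ≤ U := tsum_nonneg fun n => u_nonneg hKnn n
  set η := min (1/2) (ε / (2 * (U + 2 * x + 4))) with hη
  have hη0 : 0 < η := lt_min (by norm_num) (by positivity)
  have hη12 : η ≤ 1/2 := min_le_left _ _
  have hxη : 0 ≤ x - η := by linarith
  have hηε : η * (U + 2 * x + 3) ≤ ε := by
    have h1 : η ≤ ε / (2 * (U + 2 * x + 4)) := min_le_right _ _
    have h2 : η * (U + 2 * x + 3) ≤ (ε / (2 * (U + 2 * x + 4))) * (U + 2 * x + 3) :=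
      mul_le_mul_of_nonneg_right h1 (by linarith)
    have h3 : (ε / (2 * (U + 2 * x + 4))) * (U + 2 * x + 3) ≤ ε := by
      rw [div_mul_eq_mul_div, div_le_iff₀ (by positivity)]
      nlinarith
    linarith
  rcases (hUsum.hasSum.tendsto_sum_nat.eventually
    (eventually_ge_nhds (by linarith : U - η < U))).exists_forall_of_atTop with ⟨M₀, hM₀⟩
  rcases (hKsummable.hasSum.tendsto_sum_nat.eventually
    (eventually_ge_nhds (by linarith : s - η < s))).exists_forall_of_atTop with ⟨MK, hMK⟩
  set M₂ := M₀ + n₀ + 1 with hM₂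
  set M := MK + 1 with hM
  rcases eventually_atTop.1 (hev η hη0) with ⟨Na, hNa⟩
  rcases eventually_atTop.1
    (ratio_ev_lower hcK hKform hL hα (max M₂ M) (show 1 - η < (1:ℝ) by linarith)) with ⟨Nr, hNr⟩
  filter_upwards [eventually_ge_atTop (Nr + Na + 2 * M₂ + 2 * M + 2 * n₀ + 8)] with n hnb
  obtain ⟨m, rfl⟩ : ∃ m, n = m + 1 := ⟨n - 1, by omega⟩
  set n := m + 1 with hn
  have hKn : 0 < K n := hKpos n (by omega)
  have hratio : ∀ j ∈ Finset.Icc 1 (max M₂ M), (1 - η) * K n ≤ K (n - j) := hNr n (by omega)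
  rw [le_div_iff₀ hKn]
  have hrec := u_rec K m
  rw [hrec, Finset.range_eq_Ico,
      ← Finset.sum_Ico_consecutive _ (by omega : 0 ≤ M₂) (by omega : M₂ ≤ n),
      ← Finset.sum_Ico_consecutive _ (by omega : M₂ ≤ n - M) (by omega : n - M ≤ n)]
  have T1 : ((1 - η) * (U - η)) * K n
      ≤ ∑ j ∈ Finset.Ico 0 M₂, K (n - j) * renewalMass K j := by
    have step : ∀ j ∈ Finset.Ico 0 M₂, ((1 - η) * K n) * renewalMass K j
        ≤ K (n - j) * renewalMass K j := by
      intro j hj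
      simp only [Finset.mem_Ico] at hj
      apply mul_le_mul_of_nonneg_right _ (u_nonneg hKnn j)
      rcases Nat.eq_zero_or_pos j with h0 | h0
      · subst h0; simp only [Nat.sub_zero]; nlinarith
      · exact hratio j (by simp only [Finset.mem_Icc]; omega)
    have hpartial : U - η ≤ ∑ j ∈ Finset.Ico 0 M₂, renewalMass K j := by
      rw [← Finset.range_eq_Ico]
      exact hM₀ M₂ (by omega)
    calc ((1 - η) * (U - η)) * K n = ((1 - η) * K n) * (U - η) := by ring
      _ ≤ ((1 - η) * K n) * ∑ j ∈ Finset.Ico 0 M₂, renewalMass K j := by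
          apply mul_le_mul_of_nonneg_left hpartial
          have h12 : (0:ℝ) ≤ 1 - η := by linarith
          positivity
      _ = ∑ j ∈ Finset.Ico 0 M₂, ((1 - η) * K n) * renewalMass K j := by rw [Finset.mul_sum]
      _ ≤ ∑ j ∈ Finset.Ico 0 M₂, K (n - j) * renewalMass K j := Finset.sum_le_sum step
  have Tmid : (0:ℝ) ≤ ∑ j ∈ Finset.Ico M₂ (n - M), K (n - j) * renewalMass K j :=
    Finset.sum_nonneg fun j _ => mul_nonneg (hKnn _) (u_nonneg hKnn j)
  have T3 : ((s - η) * ((x - η) * (1 - η))) * K n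
      ≤ ∑ j ∈ Finset.Ico (n - M) n, K (n - j) * renewalMass K j := by
    have step : ∀ j ∈ Finset.Ico (n - M) n, K (n - j) * (((x - η) * (1 - η)) * K n)
        ≤ K (n - j) * renewalMass K j := by
      intro j hj
      simp only [Finset.mem_Ico] at hj
      apply mul_le_mul_of_nonneg_left _ (hKnn _)
      have hKj : 0 < K j := hKpos j (by omega)
      have hρ : x - η ≤ renewalMass K j / K j := hNa j (by omega)
      rw [le_div_iff₀ hKj] at hρ
      have hKjb : (1 - η) * K n ≤ K j := by
        have hjj : K j = K (n - (n - j)) := by congr 1; omega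
        rw [hjj]
        exact hratio (n - j) (by simp only [Finset.mem_Icc]; omega)
      calc ((x - η) * (1 - η)) * K n = (x - η) * ((1 - η) * K n) := by ring
        _ ≤ (x - η) * K j := mul_le_mul_of_nonneg_left hKjb hxη
        _ ≤ renewalMass K j := hρ
    have hwindow : s - η ≤ ∑ j ∈ Finset.Ico (n - M) n, K (n - j) := by
      rw [Finset.sum_Ico_reflect _ _ (by omega)]
      have e1 : n + 1 - (n - M) = M + 1 := by omega
      have e2 : n + 1 - n = 1 := by omega
      rw [e1, e2, sum_Ico_one_eq]
      exact hMK M (by omega)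
    calc ((s - η) * ((x - η) * (1 - η))) * K n
        = (s - η) * (((x - η) * (1 - η)) * K n) := by ring
      _ ≤ (∑ j ∈ Finset.Ico (n - M) n, K (n - j)) * (((x - η) * (1 - η)) * K n) := by
          apply mul_le_mul_of_nonneg_right hwindow
          have h12 : (0:ℝ) ≤ 1 - η := by linarith
          positivity
      _ = ∑ j ∈ Finset.Ico (n - M) n, K (n - j) * (((x - η) * (1 - η)) * K n) := by
          rw [Finset.sum_mul]
      _ ≤ ∑ j ∈ Finset.Ico (n - M) n, K (n - j) * renewalMass K j := Finset.sum_le_sum step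
  have harith : (U + s * x - ε) * K n
      ≤ ((1 - η) * (U - η)) * K n + ((s - η) * ((x - η) * (1 - η))) * K n := by
    have hfac : U + s * x - ε ≤ (1 - η) * (U - η) + (s - η) * ((x - η) * (1 - η)) := by
      nlinarith [hηε, mul_nonneg (le_of_lt hη0) hU0, mul_nonneg (le_of_lt hη0) hs0,
        mul_nonneg (le_of_lt hη0) (le_of_lt hη0),
        mul_nonneg (mul_nonneg (le_of_lt hη0) (le_of_lt hη0)) (le_of_lt hη0),
        mul_nonneg (mul_nonneg (le_of_lt hη0) hs0) (by linarith : (0:ℝ) ≤ x),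
        mul_nonneg (mul_nonneg (le_of_lt hη0) (le_of_lt hη0)) hs0,
        mul_nonneg (mul_nonneg (le_of_lt hη0) (le_of_lt hη0)) (by linarith : (0:ℝ) ≤ x),
        mul_le_mul_of_nonneg_left hKsum (le_of_lt hη0),
        mul_nonneg (le_of_lt hη0) (by linarith : (0:ℝ) ≤ x)]
    have := mul_le_mul_of_nonneg_right hfac (le_of_lt hKn)
    nlinarith [this]
  linarith

end RenewalAux

namespace RenewalAux

theorem le_of_pos_add {a c : ℝ} (h : ∀ ε : ℝ, 0 < ε → a ≤ c + ε) : a ≤ c := by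
  by_contra hc
  push_neg at hc
  have := h ((a - c) / 2) (by linarith)
  linarith

end RenewalAux


open RenewalAux in
theorem renewal_mass_asymptotics_terminating
    (α : ℝ) (hα : 0 < α)
    (K L : ℕ → ℝ) (cK : ℝ) (hcK : 0 < cK)
    (hK0 : K 0 = 0) (hKnn : ∀ n, 0 ≤ K n)
    (hKsummable : Summable fun n : ℕ => K (n + 1))
    (hKsum : ∑' n : ℕ, K (n + 1) ≤ 1)
    (hKform : ∀ n : ℕ, 1 ≤ n → K n = L n / (n : ℝ) ^ (1 + α))
    (hL : Tendsto L atTop (nhds cK))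
    (hterm : 0 < 1 - ∑' n : ℕ, K (n + 1)) :
    Tendsto (fun n : ℕ => renewalMass K n * (1 - ∑' m : ℕ, K (m + 1)) ^ 2 / K n)
      atTop (nhds 1) := by
  classical
  set s := ∑' m : ℕ, K (m + 1) with hsdef
  have hs0 : 0 ≤ s := tsum_nonneg fun n => hKnn _
  set δ := 1 - s with hδdef
  have hδ0 : 0 < δ := hterm
  obtain ⟨B, hB0, n₀, hn₀1, hKpos, hBnd⟩ := u_bounded hKnn hKsummable hterm hα hcK hKform hL
  set ρ := fun n : ℕ => renewalMass K n / K n with hρ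
  have hρnn : ∀ n, 0 ≤ ρ n := fun n => div_nonneg (u_nonneg hKnn n) (hKnn n)
  have hevB : ∀ᶠ n in atTop, ρ n ≤ B := by
    filter_upwards [eventually_ge_atTop n₀] with n hn
    rw [hρ]
    simp only
    rw [div_le_iff₀ (hKpos n hn)]
    linarith [hBnd n hn]
  have hbddAbove : IsBoundedUnder (· ≤ ·) atTop ρ := isBoundedUnder_of_eventually_le hevB
  have hbddBelow : IsBoundedUnder (· ≥ ·) atTop ρ :=
    isBoundedUnder_of_eventually_ge (Eventually.of_forall hρnn)
  set a := limsup ρ atTop with ha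
  set b := liminf ρ atTop with hb
  have hba : b ≤ a := liminf_le_limsup hbddAbove hbddBelow
  have hb0 : 0 ≤ b :=
    le_liminf_of_le hbddAbove.isCoboundedUnder_ge (Eventually.of_forall hρnn)
  have ha0 : 0 ≤ a := le_trans hb0 hba
  set U := ∑' k : ℕ, renewalMass K k with hU
  have hUval : U = δ⁻¹ := u_tsum hKnn hKsummable hterm
  have hU1 : (1:ℝ) ≤ U := by
    rw [hUval]
    calc (1:ℝ) = 1⁻¹ := by norm_num
      _ ≤ δ⁻¹ := by
          apply inv_anti₀ hδ0
          rw [hδdef]; linarith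
  have hevA : ∀ η, 0 < η → ∀ᶠ k in atTop, ρ k ≤ a + η := fun η hη =>
    (eventually_lt_of_limsup_lt (lt_add_of_pos_right a hη) hbddAbove).mono
      fun k hk => le_of_lt hk
  have hkey1 : a ≤ U + s * a := by
    apply le_of_pos_add
    intro ε hε
    have hE := E1 hKnn hKsummable hKsum hterm hα hcK hKform hL hB0 hn₀1 hKpos hBnd ha0 hevA hε
    have := limsup_le_of_le hbddBelow.isCoboundedUnder_le hE
    linarith
  have hkey0 : U ≤ b := by
    apply le_of_pos_add
    intro ε hε
    have hE := E0 hKnn hKsummable hterm hα hcK hKform hL hKpos hε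
    have := le_liminf_of_le hbddAbove.isCoboundedUnder_ge hE
    linarith
  have hb1 : (1:ℝ) ≤ b := le_trans hU1 hkey0
  have hevb : ∀ η, 0 < η → ∀ᶠ k in atTop, b - η ≤ ρ k := fun η hη =>
    (eventually_lt_of_lt_liminf (by linarith : b - η < b) hbddBelow).mono
      fun k hk => le_of_lt hk
  have hkey2 : U + s * b ≤ b := by
    apply le_of_pos_add
    intro ε hε
    have hE := E2 hKnn hKsummable hKsum hterm hα hcK hKform hL hKpos hb1 hevb hε
    have := le_liminf_of_le hbddAbove.isCoboundedUnder_ge hE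
    linarith
  set V := δ⁻¹ * δ⁻¹ with hV
  have hδne : δ ≠ 0 := ne_of_gt hδ0
  have haV : a ≤ V := by
    have h1 : a * δ ≤ δ⁻¹ := by
      rw [← hUval, hδdef]; nlinarith [hkey1]
    have h2 : a * δ * δ⁻¹ ≤ δ⁻¹ * δ⁻¹ :=
      mul_le_mul_of_nonneg_right h1 (by positivity)
    rwa [mul_assoc, mul_inv_cancel₀ hδne, mul_one] at h2
  have hbV : V ≤ b := by
    have h1 : δ⁻¹ ≤ b * δ := by
      rw [← hUval, hδdef]; nlinarith [hkey2]
    have h2 : δ⁻¹ * δ⁻¹ ≤ b * δ * δ⁻¹ :=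
      mul_le_mul_of_nonneg_right h1 (by positivity)
    rwa [mul_assoc, mul_inv_cancel₀ hδne, mul_one] at h2
  have haeq : a = V := le_antisymm haV (le_trans hbV hba)
  have hbeq : b = V := le_antisymm (le_trans hba haV) hbV
  have htend : Tendsto ρ atTop (nhds V) :=
    tendsto_of_liminf_eq_limsup hbeq haeq hbddAbove hbddBelow
  have htend2 : Tendsto (fun n => ρ n * δ ^ 2) atTop (nhds (V * δ ^ 2)) :=
    htend.mul_const _
  have hVδ : V * δ ^ 2 = 1 := by
    rw [hV]
    field_simp
  rw [hVδ] at htend2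
  apply htend2.congr
  intro n
  rw [hρ]
  simp only
  rw [mul_div_right_comm]
end

section
/- Set h_c(0) := −log Σ_{n≥1} K(n). For every h ≥ h_c(0) (equivalently, e^h Σ_{n≥1} K(n) ≥ 1) there exists a unique b(h) ≥ 0 such that Σ_{n≥1} e^{h − b(h) n} K(n) = 1; set b(h) := 0 for h < h_c(0). Then for every h ∈ ℝ the limit lim_{N→∞} (1/N) log Z^c_{N,h} exists and equals b(h). -/
open MeasureTheory ProbabilityTheory Filter Topology

lemma FE_prod_blocksFun (g : ℕ → ℝ) {n : ℕ} (c : Composition n) :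
    (∏ i : Fin c.length, g (c.blocksFun i)) = (c.blocks.map g).prod := by
  conv_rhs => rw [← Composition.ofFn_blocksFun c, List.map_ofFn, List.prod_ofFn]
  rfl

lemma FE_ZcHom_eq (K : ℕ → ℝ) (h : ℝ) (N : ℕ) :
    ZcHom K h N = ∑ c : Composition N, ((c.blocks.map (fun m => Real.exp h * K m)).prod) := by
  unfold ZcHom Zc
  refine Finset.sum_congr rfl fun c _ => ?_
  rw [← FE_prod_blocksFun]
  exact Finset.prod_congr rfl fun i _ => mul_comm _ _

lemma FE_Zc_zero (K : ℕ → ℝ) (h : ℝ) : ZcHom K h 0 = 1 := by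
  rw [FE_ZcHom_eq]
  have h1 : ∀ c : Composition 0, ((c.blocks.map (fun m => Real.exp h * K m)).prod) = 1 := by
    intro c
    have : c.blocks = [] := by
      have hs := c.blocks_sum
      cases hb : c.blocks with
      | nil => rfl
      | cons a t =>
        exfalso
        have ha : 0 < a := c.blocks_pos (by rw [hb]; exact List.mem_cons_self)
        rw [hb] at hs
        simp [List.sum_cons] at hs
        omega
    simp [this]
  rw [Finset.sum_congr rfl fun c _ => h1 c, Finset.sum_const]
  rw [Finset.card_univ, composition_card]
  simp

def FE_compSuccEquiv (N : ℕ) : Composition (N + 1) ≃ Σ m : Fin (N + 1), Composition (N - m.1) where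
  toFun c :=
    have hne : c.blocks ≠ [] := by
      intro hb
      have hs := c.blocks_sum
      rw [hb] at hs
      simp at hs
    have h1 : 1 ≤ c.blocks.head! := c.blocks_pos (List.head!_mem_self hne)
    have hsum : c.blocks.head! + c.blocks.tail.sum = N + 1 := by
      conv_rhs => rw [← c.blocks_sum, ← List.cons_head!_tail hne]
      simp
    ⟨⟨c.blocks.head! - 1, by omega⟩,
     ⟨c.blocks.tail, fun hi => c.blocks_pos (List.mem_of_mem_tail hi), by
        simp only []
        omega⟩⟩
  invFun p :=
    ⟨(p.1.1 + 1) :: p.2.blocks, by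
      intro i hi
      rcases List.mem_cons.1 hi with h | h
      · omega
      · exact p.2.blocks_pos h, by
      have := p.2.blocks_sum
      have h2 := p.1.2
      simp [List.sum_cons, this]
      omega⟩
  left_inv c := by
    have hne : c.blocks ≠ [] := by
      intro hb
      have hs := c.blocks_sum
      rw [hb] at hs
      simp at hs
    have h1 : 1 ≤ c.blocks.head! := c.blocks_pos (List.head!_mem_self hne)
    ext1
    · simp only []
      rw [Nat.sub_add_cancel h1]
      exact List.cons_head!_tail hne
  right_inv p := rfl

lemma FE_ZcHom_succ (K : ℕ → ℝ) (h : ℝ) (N : ℕ) :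
    ZcHom K h (N + 1)
      = ∑ m ∈ Finset.range (N + 1), (Real.exp h * K (m + 1)) * ZcHom K h (N - m) := by
  rw [FE_ZcHom_eq]
  rw [← Equiv.sum_comp (FE_compSuccEquiv N).symm
    (fun c => ((Composition.blocks c).map (fun m => Real.exp h * K m)).prod)]
  rw [← Finset.univ_sigma_univ, Finset.sum_sigma]
  rw [← Fin.sum_univ_eq_sum_range (fun m => (Real.exp h * K (m + 1)) * ZcHom K h (N - m)) (N+1)]
  refine Finset.sum_congr rfl fun m _ => ?_
  rw [FE_ZcHom_eq, Finset.mul_sum]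
  refine Finset.sum_congr rfl fun c _ => ?_
  have : ((FE_compSuccEquiv N).symm ⟨m, c⟩).blocks = (m.1 + 1) :: c.blocks := rfl
  rw [this, List.map_cons, List.prod_cons]

lemma FE_ZcHom_eq_renewal (K : ℕ → ℝ) (h : ℝ) :
    ∀ N, ZcHom K h N = renewalMass (fun m => Real.exp h * K m) N := by
  intro N
  induction N using Nat.strong_induction_on with
  | _ N ih =>
    match N with
    | 0 => rw [FE_Zc_zero]; simp [renewalMass]
    | n + 1 =>
      rw [FE_ZcHom_succ, renewalMass]
      exact Finset.sum_congr rfl fun m hm => by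
        rw [ih (n - m) (by omega)]

lemma FE_renewal_nonneg (q : ℕ → ℝ) (hq : ∀ n, 0 ≤ q n) : ∀ N, 0 ≤ renewalMass q N := by
  intro N
  induction N using Nat.strong_induction_on with
  | _ N ih =>
    match N with
    | 0 => simp [renewalMass]
    | n + 1 =>
      rw [renewalMass]
      exact Finset.sum_nonneg fun m hm =>
        mul_nonneg (hq _) (ih (n - m) (by omega))

lemma FE_renewal_ge_single (q : ℕ → ℝ) (hq : ∀ n, 0 ≤ q n) (n : ℕ) :
    q (n + 1) ≤ renewalMass q (n + 1) := by
  rw [renewalMass]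
  have h0 : q (n + 1) = q (n + 1) * renewalMass q (n - n) := by simp [renewalMass]
  rw [h0]
  exact Finset.single_le_sum (f := fun m => q (m + 1) * renewalMass q (n - m))
    (fun m _ => mul_nonneg (hq _) (FE_renewal_nonneg q hq _))
    (Finset.self_mem_range_succ n)

lemma FE_renewal_superadd (q : ℕ → ℝ) (hq : ∀ n, 0 ≤ q n) :
    ∀ a b : ℕ, renewalMass q a * renewalMass q b ≤ renewalMass q (a + b) := by
  intro a
  induction a using Nat.strong_induction_on with
  | _ a ih =>
    match a with
    | 0 => intro b; simp [renewalMass]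
    | n + 1 =>
      intro b
      have h1 : n + 1 + b = (n + b) + 1 := by omega
      rw [renewalMass, h1, renewalMass, Finset.sum_mul]
      calc ∑ m ∈ Finset.range (n + 1), q (m + 1) * renewalMass q (n - m) * renewalMass q b
          ≤ ∑ m ∈ Finset.range (n + 1), q (m + 1) * renewalMass q (n + b - m) := by
            refine Finset.sum_le_sum fun m hm => ?_
            rw [mul_assoc]
            refine mul_le_mul_of_nonneg_left ?_ (hq _)
            have hm' : m < n + 1 := Finset.mem_range.1 hm
            have : n + b - m = (n - m) + b := by omega
            rw [this]
            exact ih (n - m) (by omega) b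
        _ ≤ ∑ m ∈ Finset.range (n + b + 1), q (m + 1) * renewalMass q (n + b - m) := by
            refine Finset.sum_le_sum_of_subset_of_nonneg ?_ fun m _ _ =>
              mul_nonneg (hq _) (FE_renewal_nonneg q hq _)
            exact Finset.range_subset_range.2 (by omega)

lemma FE_renewal_le_one (q : ℕ → ℝ) (hq : ∀ n, 0 ≤ q n)
    (hs : Summable fun n => q (n + 1)) (hle : ∑' n, q (n + 1) ≤ 1) :
    ∀ N, renewalMass q N ≤ 1 := by
  intro N
  induction N using Nat.strong_induction_on with
  | _ N ih =>
    match N with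
    | 0 => simp [renewalMass]
    | n + 1 =>
      rw [renewalMass]
      calc ∑ m ∈ Finset.range (n + 1), q (m + 1) * renewalMass q (n - m)
          ≤ ∑ m ∈ Finset.range (n + 1), q (m + 1) := by
            refine Finset.sum_le_sum fun m hm => ?_
            have := ih (n - m) (by have := Finset.mem_range.1 hm; omega)
            calc q (m + 1) * renewalMass q (n - m) ≤ q (m + 1) * 1 :=
              mul_le_mul_of_nonneg_left this (hq _)
            _ = q (m + 1) := mul_one _
        _ ≤ ∑' m, q (m + 1) := Summable.sum_le_tsum _ (fun m _ => hq _) hs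
        _ ≤ 1 := hle

lemma FE_renewal_tilt (q : ℕ → ℝ) (x : ℝ) :
    ∀ N, renewalMass (fun m => q m * x ^ m) N = renewalMass q N * x ^ N := by
  intro N
  induction N using Nat.strong_induction_on with
  | _ N ih =>
    match N with
    | 0 => simp [renewalMass]
    | n + 1 =>
      rw [renewalMass]
      conv_rhs => rw [renewalMass]
      rw [Finset.sum_mul]
      refine Finset.sum_congr rfl fun m hm => ?_
      have hm' : m < n + 1 := Finset.mem_range.1 hm
      rw [ih (n - m) (by omega)]
      have : x ^ (m + 1) * x ^ (n - m) = x ^ (n + 1) := by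
        rw [← pow_add]
        congr 1
        omega
      calc q (m + 1) * x ^ (m + 1) * (renewalMass q (n - m) * x ^ (n - m))
          = q (m + 1) * renewalMass q (n - m) * (x ^ (m + 1) * x ^ (n - m)) := by ring
        _ = q (m + 1) * renewalMass q (n - m) * x ^ (n + 1) := by rw [this]

lemma FE_renewal_eq_Icc (q : ℕ → ℝ) (n : ℕ) :
    renewalMass q (n + 1) = ∑ m ∈ Finset.Icc 1 (n + 1), q m * renewalMass q (n + 1 - m) := by
  rw [renewalMass]
  refine Finset.sum_nbij' (fun m => m + 1) (fun m => m - 1) ?_ ?_ ?_ ?_ ?_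
  · intro a ha; simp only [Finset.mem_range] at ha; simp only [Finset.mem_Icc]; omega
  · intro a ha; simp only [Finset.mem_Icc] at ha; simp only [Finset.mem_range]; omega
  · intro a _; omega
  · intro a ha; simp only [Finset.mem_Icc] at ha; omega
  · intro a ha
    simp only [Finset.mem_range] at ha
    congr 2
    omega


lemma FE_counting (q : ℕ → ℝ) (hq : ∀ n, 0 ≤ q n) (M : ℕ) (hM : 1 ≤ M) :
    ∀ k : ℕ, (∑ m ∈ Finset.Icc 1 M, q m) ^ k ≤ ∑ N ∈ Finset.Icc k (k * M), renewalMass q N := by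
  intro k
  induction k with
  | zero => simp [renewalMass]
  | succ k ih =>
    set c := ∑ m ∈ Finset.Icc 1 M, q m with hc
    have hcnn : 0 ≤ c := Finset.sum_nonneg fun m _ => hq m
    have hMM : (k + 1) * M = k * M + M := by ring
    have key : ∀ m ∈ Finset.Icc 1 M,
        q m * ∑ N ∈ Finset.Icc k (k * M), renewalMass q N
          ≤ ∑ N ∈ Finset.Icc (k + 1) ((k + 1) * M),
              (if m ≤ N then q m * renewalMass q (N - m) else 0) := by
      intro m hm
      rw [Finset.mem_Icc] at hm
      have h1 : ∑ N ∈ Finset.Icc (k + m) (k * M + m),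
            (if m ≤ N then q m * renewalMass q (N - m) else 0)
          = q m * ∑ N ∈ Finset.Icc k (k * M), renewalMass q N := by
        rw [Finset.mul_sum]
        refine Finset.sum_nbij' (fun N => N - m) (fun N => N + m) ?_ ?_ ?_ ?_ ?_
        · intro a ha; simp only [Finset.mem_Icc] at *; omega
        · intro a ha; simp only [Finset.mem_Icc] at *; omega
        · intro a ha; simp only [Finset.mem_Icc] at ha; omega
        · intro a _; omega
        · intro a ha
          simp only [Finset.mem_Icc] at ha
          rw [if_pos (by omega)]
      rw [← h1]
      refine Finset.sum_le_sum_of_subset_of_nonneg ?_ ?_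
      · intro N hN
        simp only [Finset.mem_Icc] at *
        omega
      · intro N _ _
        split
        · exact mul_nonneg (hq _) (FE_renewal_nonneg q hq _)
        · exact le_rfl
    have perN : ∀ N ∈ Finset.Icc (k + 1) ((k + 1) * M),
        (∑ m ∈ Finset.Icc 1 M, if m ≤ N then q m * renewalMass q (N - m) else 0)
          ≤ renewalMass q N := by
      intro N hN
      rw [Finset.mem_Icc] at hN
      obtain ⟨n, rfl⟩ : ∃ n, N = n + 1 := ⟨N - 1, by omega⟩
      rw [FE_renewal_eq_Icc]
      rw [← Finset.sum_filter]
      refine Finset.sum_le_sum_of_subset_of_nonneg ?_ ?_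
      · intro m hm
        simp only [Finset.mem_filter, Finset.mem_Icc] at *
        omega
      · intro m _ _
        exact mul_nonneg (hq _) (FE_renewal_nonneg q hq _)
    calc c ^ (k + 1) = c * c ^ k := by ring
      _ ≤ c * ∑ N ∈ Finset.Icc k (k * M), renewalMass q N :=
          mul_le_mul_of_nonneg_left ih hcnn
      _ = ∑ m ∈ Finset.Icc 1 M, q m * ∑ N ∈ Finset.Icc k (k * M), renewalMass q N :=
          Finset.sum_mul _ _ _
      _ ≤ ∑ m ∈ Finset.Icc 1 M, ∑ N ∈ Finset.Icc (k + 1) ((k + 1) * M),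
            (if m ≤ N then q m * renewalMass q (N - m) else 0) :=
          Finset.sum_le_sum key
      _ = ∑ N ∈ Finset.Icc (k + 1) ((k + 1) * M), ∑ m ∈ Finset.Icc 1 M,
            (if m ≤ N then q m * renewalMass q (N - m) else 0) := Finset.sum_comm
      _ ≤ ∑ N ∈ Finset.Icc (k + 1) ((k + 1) * M), renewalMass q N :=
          Finset.sum_le_sum perN

lemma FE_exists_large (q : ℕ → ℝ) (hq : ∀ n, 0 ≤ q n) (M : ℕ) (hM : 1 ≤ M)
    (hc : 1 < ∑ m ∈ Finset.Icc 1 M, q m) (χ : ℝ) (k0 : ℕ) :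
    ∃ N : ℕ, k0 ≤ N ∧ χ < renewalMass q N := by
  set c := ∑ m ∈ Finset.Icc 1 M, q m with hcdef
  have hc0 : 0 < c := lt_trans one_pos hc
  set r : ℝ := 1 / c with hr
  have hr0 : 0 ≤ r := by positivity
  have hr1 : r < 1 := by
    rw [hr, div_lt_one hc0]; exact hc
  set χ' : ℝ := max χ 0 with hχ'
  -- (k*M+1) * χ' * r^k → 0
  have hten : Tendsto (fun k : ℕ => ((k * M + 1 : ℕ) : ℝ) * χ' * r ^ k) atTop (𝓝 0) := by
    have h1 : Tendsto (fun k : ℕ => (k : ℝ) * r ^ k) atTop (𝓝 0) :=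
      tendsto_self_mul_const_pow_of_lt_one hr0 hr1
    have h2 : Tendsto (fun k : ℕ => r ^ k) atTop (𝓝 0) :=
      tendsto_pow_atTop_nhds_zero_of_lt_one hr0 hr1
    have h3 : Tendsto (fun k : ℕ => ((M : ℝ) * χ') * ((k : ℝ) * r ^ k) + χ' * r ^ k)
        atTop (𝓝 (((M : ℝ) * χ') * 0 + χ' * 0)) :=
      ((h1.const_mul _).add (h2.const_mul _))
    rw [mul_zero, mul_zero, add_zero] at h3
    refine h3.congr fun k => ?_
    push_cast
    ring
  have hev : ∀ᶠ k : ℕ in atTop, ((k * M + 1 : ℕ) : ℝ) * χ' * r ^ k < 1 :=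
    hten.eventually (gt_mem_nhds one_pos)
  obtain ⟨k, hk0, hklt⟩ : ∃ k : ℕ, k0 ≤ k ∧ ((k * M + 1 : ℕ) : ℝ) * χ' * r ^ k < 1 := by
    rcases (hev.and (eventually_ge_atTop k0)).exists with ⟨k, h1, h2⟩
    exact ⟨k, h2, h1⟩
  have hrk : 0 < r ^ k := pow_pos (by positivity) k
  have hcr : c ^ k * r ^ k = 1 := by
    rw [← mul_pow, hr, mul_one_div, div_self (ne_of_gt hc0), one_pow]
  by_contra hcon
  push_neg at hcon
  have hall : ∀ N ∈ Finset.Icc k (k * M), renewalMass q N ≤ χ' := by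
    intro N hN
    rw [Finset.mem_Icc] at hN
    exact le_trans (hcon N (le_trans hk0 hN.1)) (le_max_left _ _)
  have hbound : c ^ k ≤ ((k * M + 1 : ℕ) : ℝ) * χ' := by
    calc c ^ k ≤ ∑ N ∈ Finset.Icc k (k * M), renewalMass q N := FE_counting q hq M hM k
      _ ≤ (Finset.Icc k (k * M)).card • χ' := Finset.sum_le_card_nsmul _ _ _ hall
      _ = ((Finset.Icc k (k * M)).card : ℝ) * χ' := nsmul_eq_mul _ _
      _ ≤ ((k * M + 1 : ℕ) : ℝ) * χ' := by
          refine mul_le_mul_of_nonneg_right ?_ (le_max_right χ 0)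
          have : (Finset.Icc k (k * M)).card = k * M + 1 - k := Nat.card_Icc _ _
          rw [this]
          exact Nat.cast_le.2 (Nat.sub_le _ _)
  have : c ^ k * r ^ k ≤ ((k * M + 1 : ℕ) : ℝ) * χ' * r ^ k :=
    mul_le_mul_of_nonneg_right hbound (le_of_lt hrk)
  rw [hcr] at this
  exact absurd (lt_of_le_of_lt this hklt) (lt_irrefl 1)

section FE_analysis

variable {K : ℕ → ℝ} {h b : ℝ}

lemma FE_Knn' (hKnn : ∀ n, 0 ≤ K n) (h : ℝ) : ∀ n, 0 ≤ Real.exp h * K n :=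
  fun n => mul_nonneg (Real.exp_pos h).le (hKnn n)

lemma FE_Z_nonneg (hKnn : ∀ n, 0 ≤ K n) (N : ℕ) : 0 ≤ ZcHom K h N := by
  rw [FE_ZcHom_eq_renewal]
  exact FE_renewal_nonneg _ (FE_Knn' hKnn h) N

lemma FE_q_eq (K : ℕ → ℝ) (h b : ℝ) (n : ℕ) :
    Real.exp h * K (n + 1) * Real.exp (-b) ^ (n + 1)
      = Real.exp (h - b * (n + 1)) * K (n + 1) := by
  rw [← Real.exp_nat_mul]
  rw [mul_comm (Real.exp h) (K (n + 1)), mul_assoc, ← Real.exp_add]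
  have : h + ((n + 1 : ℕ) : ℝ) * (-b) = h - b * ((n : ℝ) + 1) := by push_cast; ring
  rw [this]
  ring

lemma FE_S_summable (hKnn : ∀ n, 0 ≤ K n)
    (hs : Summable fun n : ℕ => K (n + 1)) (hb : 0 ≤ b) :
    Summable fun n : ℕ => Real.exp (h - b * (n + 1)) * K (n + 1) := by
  refine Summable.of_nonneg_of_le (fun n => mul_nonneg (Real.exp_pos _).le (hKnn _))
    (fun n => ?_) (hs.mul_left (Real.exp h))
  refine mul_le_mul_of_nonneg_right ?_ (hKnn _)
  apply Real.exp_le_exp.2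
  have : 0 ≤ b * ((n : ℝ) + 1) := mul_nonneg hb (by positivity)
  linarith

lemma FE_Z_le_exp (hKnn : ∀ n, 0 ≤ K n) (hs : Summable fun n : ℕ => K (n + 1)) (hb : 0 ≤ b)
    (hle : ∑' n : ℕ, Real.exp (h - b * (n + 1)) * K (n + 1) ≤ 1) (N : ℕ) :
    ZcHom K h N ≤ Real.exp (b * N) := by
  set x : ℝ := Real.exp (-b) with hx
  have hq : ∀ n, 0 ≤ (Real.exp h * K n) * x ^ n :=
    fun n => mul_nonneg (FE_Knn' hKnn h n) (pow_nonneg (Real.exp_pos _).le n)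
  have hqe : (fun n : ℕ => (Real.exp h * K (n + 1)) * x ^ (n + 1))
      = fun n : ℕ => Real.exp (h - b * (n + 1)) * K (n + 1) := by
    funext n; exact FE_q_eq K h b n
  have h1 : renewalMass (fun m => (Real.exp h * K m) * x ^ m) N ≤ 1 := by
    refine FE_renewal_le_one _ hq ?_ ?_ N
    · rw [hqe]; exact FE_S_summable hKnn hs hb
    · rw [hqe]; exact hle
  rw [FE_renewal_tilt] at h1
  rw [FE_ZcHom_eq_renewal]
  have hxN : x ^ N = Real.exp (-(b * N)) := by
    rw [hx, ← Real.exp_nat_mul]; congr 1; ring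
  rw [hxN] at h1
  have hepos : (0:ℝ) < Real.exp (-(b * N)) := Real.exp_pos _
  calc renewalMass (fun m => Real.exp h * K m) N
      = renewalMass (fun m => Real.exp h * K m) N * Real.exp (-(b * N)) * Real.exp (b * N) := by
        rw [mul_assoc, ← Real.exp_add]; simp
    _ ≤ 1 * Real.exp (b * N) := mul_le_mul_of_nonneg_right h1 (Real.exp_pos _).le
    _ = Real.exp (b * N) := one_mul _

lemma FE_log_Z_le (hKnn : ∀ n, 0 ≤ K n) (hs : Summable fun n : ℕ => K (n + 1)) (hb : 0 ≤ b)
    (hle : ∑' n : ℕ, Real.exp (h - b * (n + 1)) * K (n + 1) ≤ 1) (N : ℕ) :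
    Real.log (ZcHom K h N) ≤ b * N := by
  rcases eq_or_lt_of_le (FE_Z_nonneg hKnn N) with hz | hz
  · rw [← hz, Real.log_zero]
    positivity
  · rw [Real.log_le_iff_le_exp hz]
    exact FE_Z_le_exp hKnn hs hb hle N

lemma FE_Z_ge_single (hKnn : ∀ n, 0 ≤ K n) (n : ℕ) :
    Real.exp h * K (n + 1) ≤ ZcHom K h (n + 1) := by
  rw [FE_ZcHom_eq_renewal]
  exact FE_renewal_ge_single _ (FE_Knn' hKnn h) n

lemma FE_Z_superadd (hKnn : ∀ n, 0 ≤ K n) (a c : ℕ) :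
    ZcHom K h a * ZcHom K h c ≤ ZcHom K h (a + c) := by
  rw [FE_ZcHom_eq_renewal, FE_ZcHom_eq_renewal, FE_ZcHom_eq_renewal]
  exact FE_renewal_superadd _ (FE_Knn' hKnn h) a c

lemma FE_Z_pow (hKnn : ∀ n, 0 ≤ K n) (N1 : ℕ) :
    ∀ k r : ℕ, ZcHom K h N1 ^ k * ZcHom K h r ≤ ZcHom K h (k * N1 + r) := by
  intro k
  induction k with
  | zero => intro r; simp
  | succ k ih =>
    intro r
    have h1 : (k + 1) * N1 + r = N1 + (k * N1 + r) := by ring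
    rw [h1]
    calc ZcHom K h N1 ^ (k + 1) * ZcHom K h r
        = ZcHom K h N1 * (ZcHom K h N1 ^ k * ZcHom K h r) := by ring
      _ ≤ ZcHom K h N1 * ZcHom K h (k * N1 + r) :=
          mul_le_mul_of_nonneg_left (ih r) (FE_Z_nonneg hKnn N1)
      _ ≤ ZcHom K h (N1 + (k * N1 + r)) := FE_Z_superadd hKnn _ _

end FE_analysis

lemma FE_Icc_range (g : ℕ → ℝ) (M : ℕ) :
    ∑ m ∈ Finset.Icc 1 M, g m = ∑ n ∈ Finset.range M, g (n + 1) := by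
  refine Finset.sum_nbij' (fun m => m - 1) (fun n => n + 1) ?_ ?_ ?_ ?_ ?_
  · intro a ha; simp only [Finset.mem_Icc] at ha; simp only [Finset.mem_range]; omega
  · intro a ha; simp only [Finset.mem_range] at ha; simp only [Finset.mem_Icc]; omega
  · intro a ha; simp only [Finset.mem_Icc] at ha; omega
  · intro a _; omega
  · intro a ha; simp only [Finset.mem_Icc] at ha; congr 1; omega

lemma FE_main (K : ℕ → ℝ) (h b : ℝ) (hKnn : ∀ n, 0 ≤ K n)
    (hs : Summable fun n : ℕ => K (n + 1))
    (n0 : ℕ) (hn0 : 1 ≤ n0) (hpos : ∀ n, n0 ≤ n → 0 < K n)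
    (hKlog : Tendsto (fun n : ℕ => Real.log (K n) / n) atTop (𝓝 0))
    (hb : 0 ≤ b)
    (hle : ∑' n : ℕ, Real.exp (h - b * (n + 1)) * K (n + 1) ≤ 1)
    (heq : b = 0 ∨ ∑' n : ℕ, Real.exp (h - b * (n + 1)) * K (n + 1) = 1) :
    Tendsto (fun N : ℕ => Real.log (ZcHom K h N) / N) atTop (𝓝 b) := by
  rw [tendsto_order]
  constructor
  · intro a ha
    rcases eq_or_lt_of_le hb with hb0 | hbpos
    · -- b = 0 : squeeze from below by (h + log K N)/N → 0
      have ha0 : a < 0 := by rw [← hb0] at ha; exact ha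
      have hlowten : Tendsto (fun N : ℕ => (h + Real.log (K N)) / N) atTop (𝓝 0) := by
        have h1 : Tendsto (fun N : ℕ => h / N) atTop (𝓝 0) :=
          tendsto_const_div_atTop_nhds_zero_nat h
        have h2 := h1.add hKlog
        rw [add_zero] at h2
        refine h2.congr fun N => ?_
        rw [← add_div]
      have hev1 : ∀ᶠ N : ℕ in atTop, a < (h + Real.log (K N)) / N :=
        hlowten.eventually (lt_mem_nhds ha0)
      filter_upwards [hev1, eventually_ge_atTop n0] with N hN1 hN2
      refine lt_of_lt_of_le hN1 ?_
      have hNc : (0:ℝ) ≤ (N:ℝ) := Nat.cast_nonneg N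
      refine div_le_div_of_nonneg_right ?_ hNc
      obtain ⟨N', rfl⟩ : ∃ t, N = t + 1 := ⟨N - 1, by omega⟩
      have hKpos : 0 < K (N' + 1) := hpos _ hN2
      have hzpos : 0 < Real.exp h * K (N' + 1) := mul_pos (Real.exp_pos h) hKpos
      have h1 : Real.log (Real.exp h * K (N' + 1)) ≤ Real.log (ZcHom K h (N' + 1)) :=
        Real.log_le_log hzpos (FE_Z_ge_single hKnn N')
      rwa [Real.log_mul (Real.exp_pos h).ne' hKpos.ne', Real.log_exp] at h1
    · -- b > 0
      have hSeq : ∑' n : ℕ, Real.exp (h - b * (n + 1)) * K (n + 1) = 1 :=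
        heq.resolve_left (by intro hz; rw [hz] at hbpos; exact lt_irrefl 0 hbpos)
      set δ : ℝ := (b - a) / 2 with hδdef
      have hδ : 0 < δ := by rw [hδdef]; linarith
      have habδ : a < b - δ := by rw [hδdef]; linarith
      set x : ℝ := Real.exp (δ - b) with hxdef
      have hx0 : 0 < x := Real.exp_pos _
      set q : ℕ → ℝ := fun m => (Real.exp h * K m) * x ^ m with hqdef
      have hqnn : ∀ m, 0 ≤ q m := fun m =>
        mul_nonneg (FE_Knn' hKnn h m) (pow_nonneg hx0.le m)
      -- Step 1: find M with partial sum of q over Icc 1 M exceeding 1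
      obtain ⟨M, hM1, hMgt⟩ : ∃ M : ℕ, 1 ≤ M ∧
          Real.exp (-δ) < ∑ n ∈ Finset.range M, Real.exp (h - b * (n + 1)) * K (n + 1) := by
        have hps : Tendsto (fun M : ℕ => ∑ n ∈ Finset.range M,
            Real.exp (h - b * (n + 1)) * K (n + 1)) atTop (𝓝 1) := by
          have := (FE_S_summable hKnn hs hb (h := h)).hasSum.tendsto_sum_nat
          rwa [hSeq] at this
        have hexpδ : Real.exp (-δ) < 1 := Real.exp_lt_one_iff.2 (by linarith)
        rcases ((hps.eventually (lt_mem_nhds hexpδ)).and (eventually_ge_atTop 1)).exists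
          with ⟨M, h1, h2⟩
        exact ⟨M, h2, h1⟩
      have hqgt : 1 < ∑ m ∈ Finset.Icc 1 M, q m := by
        have hterm : ∀ m ∈ Finset.Icc 1 M,
            Real.exp δ * (Real.exp (h - b * m) * K m) ≤ q m := by
          intro m hm
          rw [Finset.mem_Icc] at hm
          rw [hqdef]
          dsimp only
          rw [hxdef, ← Real.exp_nat_mul]
          have hrw : Real.exp h * K m * Real.exp ((m : ℝ) * (δ - b))
              = Real.exp (h + m * (δ - b)) * K m := by
            rw [mul_comm (Real.exp h) (K m), mul_assoc, ← Real.exp_add]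
            ring
          rw [hrw]
          have hrw2 : Real.exp δ * (Real.exp (h - b * m) * K m)
              = Real.exp (δ + (h - b * m)) * K m := by
            rw [← mul_assoc, ← Real.exp_add]
          rw [hrw2]
          refine mul_le_mul_of_nonneg_right (Real.exp_le_exp.2 ?_) (hKnn m)
          have hm1 : (1 : ℝ) ≤ (m : ℝ) := by exact_mod_cast hm.1
          nlinarith [hδ.le]
        calc (1 : ℝ) = Real.exp δ * Real.exp (-δ) := by rw [← Real.exp_add]; simp
          _ < Real.exp δ * ∑ n ∈ Finset.range M, Real.exp (h - b * (n + 1)) * K (n + 1) :=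
              mul_lt_mul_of_pos_left hMgt (Real.exp_pos δ)
          _ = ∑ m ∈ Finset.Icc 1 M, Real.exp δ * (Real.exp (h - b * m) * K m) := by
              rw [FE_Icc_range (fun m => Real.exp δ * (Real.exp (h - b * m) * K m)) M,
                Finset.mul_sum]
              refine Finset.sum_congr rfl fun n _ => ?_
              push_cast
              ring_nf
          _ ≤ ∑ m ∈ Finset.Icc 1 M, q m := Finset.sum_le_sum hterm
      -- Step 2: find N1 ≥ n0 with exp((b-δ)N1) < Z N1
      obtain ⟨N1, hN1n0, hN1big⟩ : ∃ N1 : ℕ, n0 ≤ N1 ∧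
          Real.exp ((b - δ) * N1) < ZcHom K h N1 := by
        obtain ⟨N1, hN1k, hN1v⟩ := FE_exists_large q hqnn M hM1 hqgt 1 n0
        refine ⟨N1, hN1k, ?_⟩
        rw [hqdef] at hN1v
        rw [FE_renewal_tilt (fun m => Real.exp h * K m) x N1] at hN1v
        rw [← FE_ZcHom_eq_renewal] at hN1v
        have hxN : x ^ N1 = Real.exp ((δ - b) * N1) := by
          rw [hxdef, ← Real.exp_nat_mul]; congr 1; ring
        rw [hxN] at hN1v
        have := mul_lt_mul_of_pos_right hN1v (Real.exp_pos ((b - δ) * N1))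
        rw [one_mul, mul_assoc, ← Real.exp_add] at this
        have hz : (δ - b) * N1 + (b - δ) * N1 = 0 := by ring
        rw [hz, Real.exp_zero, mul_one] at this
        exact this
      have hN1pos : 0 < N1 := lt_of_lt_of_le hn0 hN1n0
      -- positivity of Z r for r ≥ n0
      have hZpos : ∀ r : ℕ, n0 ≤ r → 0 < ZcHom K h r := by
        intro r hr
        obtain ⟨r', rfl⟩ : ∃ t, r = t + 1 := ⟨r - 1, by omega⟩
        exact lt_of_lt_of_le (mul_pos (Real.exp_pos h) (hpos _ hr)) (FE_Z_ge_single hKnn r')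
      set C : ℝ := (Finset.Icc n0 (n0 + N1)).inf' (by
        refine Finset.nonempty_Icc.2 (by omega)) (fun r => Real.log (ZcHom K h r)) with hCdef
      set D : ℝ := ((n0 : ℝ) + N1) * |b - δ| + |C| with hDdef
      have hfill : ∀ N : ℕ, n0 + N1 ≤ N → (b - δ) - D / N ≤ Real.log (ZcHom K h N) / N := by
        intro N hN
        have hNpos : 0 < N := by omega
        obtain ⟨k, r, hkr, hrlb, hrub⟩ : ∃ k r : ℕ, N = k * N1 + r ∧ n0 ≤ r ∧ r ≤ n0 + N1 := by
          refine ⟨(N - n0) / N1, n0 + (N - n0) % N1, ?_, by omega, ?_⟩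
          · have h1 := Nat.div_add_mod (N - n0) N1
            have h2 : (N - n0) / N1 * N1 = N1 * ((N - n0) / N1) := Nat.mul_comm _ _
            omega
          · have := Nat.mod_lt (N - n0) hN1pos
            omega
        have hZr : 0 < ZcHom K h r := hZpos r hrlb
        have hZN1 : 0 < ZcHom K h N1 := lt_trans (Real.exp_pos _) hN1big
        have hchain : Real.exp ((b - δ) * N1) ^ k * ZcHom K h r ≤ ZcHom K h N := by
          rw [hkr]
          refine le_trans ?_ (FE_Z_pow hKnn N1 k r)
          exact mul_le_mul_of_nonneg_right
            (pow_le_pow_left₀ (Real.exp_pos _).le hN1big.le k) hZr.le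
        have hpow : Real.exp ((b - δ) * N1) ^ k = Real.exp ((b - δ) * ((k : ℝ) * (N1 : ℝ))) := by
          rw [← Real.exp_nat_mul]
          congr 1
          ring
        have hkN1R : (k : ℝ) * (N1 : ℝ) = (N : ℝ) - (r : ℝ) := by
          have hle' : r ≤ N := by omega
          have hc1 : ((k * N1 : ℕ) : ℝ) = (k : ℝ) * (N1 : ℝ) := by push_cast; ring
          have hc2 : k * N1 = N - r := by omega
          rw [← hc1, hc2, Nat.cast_sub hle']
        have hlogZ : (b - δ) * ((N : ℝ) - (r : ℝ)) + C ≤ Real.log (ZcHom K h N) := by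
          have hposL : 0 < Real.exp ((b - δ) * N1) ^ k * ZcHom K h r :=
            mul_pos (pow_pos (Real.exp_pos _) k) hZr
          have h1 : Real.log (Real.exp ((b - δ) * N1) ^ k * ZcHom K h r)
              ≤ Real.log (ZcHom K h N) := Real.log_le_log hposL hchain
          rw [hpow, Real.log_mul (Real.exp_pos _).ne' hZr.ne', Real.log_exp, hkN1R] at h1
          have hC : C ≤ Real.log (ZcHom K h r) :=
            Finset.inf'_le _ (Finset.mem_Icc.2 ⟨hrlb, hrub⟩)
          linarith
        have hD : (b - δ) * N - D ≤ Real.log (ZcHom K h N) := by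
          have h1 : (b - δ) * (r : ℝ) ≤ |b - δ| * ((n0 : ℝ) + N1) := by
            calc (b - δ) * (r : ℝ) ≤ |b - δ| * (r : ℝ) :=
                mul_le_mul_of_nonneg_right (le_abs_self _) (Nat.cast_nonneg r)
              _ ≤ |b - δ| * ((n0 : ℝ) + N1) := by
                  refine mul_le_mul_of_nonneg_left ?_ (abs_nonneg _)
                  exact_mod_cast hrub
          have h2 : -|C| ≤ C := neg_abs_le C
          rw [hDdef]
          nlinarith
        have hdiv : ((b - δ) * N - D) / N ≤ Real.log (ZcHom K h N) / N :=
          div_le_div_of_nonneg_right hD (Nat.cast_nonneg N)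
        refine le_trans (le_of_eq ?_) hdiv
        have hNne : (N : ℝ) ≠ 0 := by
          have : (0:ℝ) < (N:ℝ) := by exact_mod_cast hNpos
          exact this.ne'
        rw [sub_div, mul_div_assoc, div_self hNne, mul_one]
      have hten : Tendsto (fun N : ℕ => (b - δ) - D / N) atTop (𝓝 (b - δ)) := by
        have h1 := tendsto_const_div_atTop_nhds_zero_nat D
        have h2 := h1.const_sub (b - δ)
        rwa [sub_zero] at h2
      filter_upwards [hten.eventually (lt_mem_nhds habδ), eventually_ge_atTop (n0 + N1)]
        with N h1 h2
      exact lt_of_lt_of_le h1 (hfill N h2)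
  · intro a hab
    filter_upwards [eventually_ge_atTop 1] with N hN
    have hNpos : (0 : ℝ) < N := by exact_mod_cast hN
    have h1 : Real.log (ZcHom K h N) ≤ b * N := FE_log_Z_le hKnn hs hb hle N
    have h2 : Real.log (ZcHom K h N) / N ≤ b := by
      rw [div_le_iff₀ hNpos]
      linarith [h1]
    exact lt_of_le_of_lt h2 hab


theorem homogeneous_free_energy_eq_b
    (α : ℝ) (hα : 0 < α)
    (K L : ℕ → ℝ) (cK : ℝ) (hcK : 0 < cK)
    (hK0 : K 0 = 0) (hKnn : ∀ n, 0 ≤ K n)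
    (hKsummable : Summable fun n : ℕ => K (n + 1))
    (hKsum : ∑' n : ℕ, K (n + 1) ≤ 1)
    (hKform : ∀ n : ℕ, 1 ≤ n → K n = L n / (n : ℝ) ^ (1 + α))
    (hL : Tendsto L atTop (nhds cK)) :
    (∀ h : ℝ, hc0 K ≤ h →
      ∃! b : ℝ, 0 ≤ b ∧ ∑' n : ℕ, Real.exp (h - b * (n + 1)) * K (n + 1) = 1) ∧
    (∀ h b : ℝ,
      ((hc0 K ≤ h ∧ 0 ≤ b ∧ ∑' n : ℕ, Real.exp (h - b * (n + 1)) * K (n + 1) = 1) ∨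
        (h < hc0 K ∧ b = 0)) →
      Tendsto (fun N : ℕ => Real.log (ZcHom K h N) / N) atTop (nhds b)) := by
  -- a positivity threshold
  obtain ⟨n1, hn1⟩ : ∃ n1 : ℕ, ∀ n, n1 ≤ n → cK / 2 < L n := by
    have := hL.eventually (lt_mem_nhds (half_lt_self hcK))
    exact eventually_atTop.1 this
  set n0 : ℕ := max n1 1 with hn0def
  have hn0 : 1 ≤ n0 := le_max_right _ _
  have hpos : ∀ n, n0 ≤ n → 0 < K n := by
    intro n hn
    have h1 : 1 ≤ n := le_trans (le_max_right _ _) hn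
    have h2 : n1 ≤ n := le_trans (le_max_left _ _) hn
    rw [hKform n h1]
    have hnr : (0 : ℝ) < (n : ℝ) := by exact_mod_cast h1
    exact div_pos (lt_trans (half_pos hcK) (hn1 n h2)) (Real.rpow_pos_of_pos hnr _)
  -- log K n / n → 0
  have hKlog : Tendsto (fun n : ℕ => Real.log (K n) / n) atTop (𝓝 0) := by
    have f1 : Tendsto (fun n : ℕ => Real.log (L n)) atTop (𝓝 (Real.log cK)) :=
      (Real.continuousAt_log hcK.ne').tendsto.comp hL
    have f2 : Tendsto (fun n : ℕ => Real.log (L n) / n) atTop (𝓝 0) :=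
      f1.div_atTop tendsto_natCast_atTop_atTop
    have f3 : Tendsto (fun n : ℕ => Real.log n / n) atTop (𝓝 0) :=
      (Real.isLittleO_log_id_atTop.tendsto_div_nhds_zero).comp tendsto_natCast_atTop_atTop
    have f4 : Tendsto (fun n : ℕ => Real.log (L n) / n - (1 + α) * (Real.log n / n))
        atTop (𝓝 0) := by
      have := f2.sub ((f3.const_mul (1 + α)))
      simpa using this
    refine f4.congr' ?_ |>.mono_left le_rfl
    filter_upwards [eventually_ge_atTop n0] with n hn
    have h1 : 1 ≤ n := le_trans hn0 hn
    have hnr : (0 : ℝ) < (n : ℝ) := by exact_mod_cast h1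
    have hLpos : 0 < L n := lt_trans (half_pos hcK) (hn1 n (le_trans (le_max_left _ _) hn))
    rw [hKform n h1, Real.log_div hLpos.ne' (Real.rpow_pos_of_pos hnr _).ne',
      Real.log_rpow hnr]
    rw [sub_div, mul_div_assoc]
  -- positivity of the total mass
  set T : ℝ := ∑' n : ℕ, K (n + 1) with hTdef
  have hT : 0 < T := by
    have h0 : (0 : ℝ) = ∑' _ : ℕ, (0 : ℝ) := tsum_zero.symm
    rw [hTdef, h0]
    exact Summable.tsum_lt_tsum_of_nonneg (fun _ => le_rfl) (fun n => hKnn _)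
      (hpos (n0 + 1) (by omega)) hKsummable
  -- S 0 = e^h * T
  have hS0 : ∀ h : ℝ, ∑' n : ℕ, Real.exp (h - 0 * (n + 1)) * K (n + 1) = Real.exp h * T := by
    intro h
    rw [hTdef, ← tsum_mul_left]
    exact tsum_congr fun n => by norm_num
  -- strict monotonicity of S
  have hmono : ∀ h y z : ℝ, 0 ≤ y → y < z →
      ∑' n : ℕ, Real.exp (h - z * (n + 1)) * K (n + 1)
        < ∑' n : ℕ, Real.exp (h - y * (n + 1)) * K (n + 1) := by
    intro h y z hy hyz
    refine Summable.tsum_lt_tsum_of_nonneg (fun n => mul_nonneg (Real.exp_pos _).le (hKnn _))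
      (fun n => ?_) (i := n0) ?_ (FE_S_summable hKnn hKsummable hy)
    · refine mul_le_mul_of_nonneg_right (Real.exp_le_exp.2 ?_) (hKnn _)
      have h1 : (0 : ℝ) < (n : ℝ) + 1 := by positivity
      nlinarith
    · refine mul_lt_mul_of_pos_right (Real.exp_lt_exp.2 ?_) (hpos (n0 + 1) (by omega))
      have h1 : (0 : ℝ) < (n0 : ℝ) + 1 := by positivity
      nlinarith
  constructor
  · -- Part 1 : existence and uniqueness of b(h)
    intro h hh
    have hSge : 1 ≤ ∑' n : ℕ, Real.exp (h - 0 * (n + 1)) * K (n + 1) := by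
      rw [hS0 h]
      have h1 : Real.exp (- Real.log T) ≤ Real.exp h := Real.exp_le_exp.2 hh
      rw [Real.exp_neg, Real.exp_log hT] at h1
      calc (1 : ℝ) = T⁻¹ * T := by rw [inv_mul_cancel₀ hT.ne']
        _ ≤ Real.exp h * T := mul_le_mul_of_nonneg_right h1 hT.le
    -- continuity setup
    set g : ℝ → ℝ := fun y => ∑' n : ℕ, Real.exp (h - max y 0 * (n + 1)) * K (n + 1) with hgdef
    have hgS : ∀ y : ℝ, 0 ≤ y → g y = ∑' n : ℕ, Real.exp (h - y * (n + 1)) * K (n + 1) := by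
      intro y hy
      rw [hgdef]
      dsimp only
      rw [max_eq_left hy]
    have hcont : Continuous g := by
      rw [hgdef]
      refine continuous_tsum (u := fun n => Real.exp h * K (n + 1)) (fun n => ?_)
        (hKsummable.mul_left _) (fun n y => ?_)
      · have hc1 : Continuous fun y : ℝ => h - max y 0 * ((n : ℝ) + 1) :=
          continuous_const.sub ((continuous_id.max continuous_const).mul continuous_const)
        exact (Real.continuous_exp.comp hc1).mul continuous_const
      · rw [Real.norm_eq_abs, abs_mul, abs_of_nonneg (Real.exp_pos _).le,
          abs_of_nonneg (hKnn _)]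
        refine mul_le_mul_of_nonneg_right (Real.exp_le_exp.2 ?_) (hKnn _)
        have h1 : 0 ≤ max y 0 * ((n : ℝ) + 1) :=
          mul_nonneg (le_max_right y 0) (by positivity)
        linarith
    set B : ℝ := max (h + Real.log T + 1) 0 with hBdef
    have hB0 : (0 : ℝ) ≤ B := le_max_right _ _
    have hgB : g B < 1 := by
      rw [hgS B hB0]
      have h1 : ∑' n : ℕ, Real.exp (h - B * (n + 1)) * K (n + 1)
          ≤ ∑' n : ℕ, Real.exp (h - B) * K (n + 1) := by
        refine Summable.tsum_le_tsum (fun n => ?_) (FE_S_summable hKnn hKsummable hB0)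
          (hKsummable.mul_left _)
        refine mul_le_mul_of_nonneg_right (Real.exp_le_exp.2 ?_) (hKnn _)
        have h2 : B * 1 ≤ B * ((n : ℝ) + 1) := by
          refine mul_le_mul_of_nonneg_left ?_ hB0
          have : (0:ℝ) ≤ (n:ℝ) := Nat.cast_nonneg n
          linarith
        linarith
      rw [tsum_mul_left, ← hTdef] at h1
      refine lt_of_le_of_lt h1 ?_
      have h3 : Real.exp (h - B) * T = Real.exp (h - B + Real.log T) := by
        rw [Real.exp_add, Real.exp_log hT]
      rw [h3]
      have h4 : h - B + Real.log T ≤ -1 := by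
        have := le_max_left (h + Real.log T + 1) 0
        have h5 : h + Real.log T + 1 ≤ B := this
        linarith
      calc Real.exp (h - B + Real.log T) ≤ Real.exp (-1) := Real.exp_le_exp.2 h4
        _ < 1 := Real.exp_lt_one_iff.2 (by norm_num)
    have hg0 : 1 ≤ g 0 := by
      rw [hgS 0 le_rfl]
      exact hSge
    obtain ⟨b, hbmem, hgb⟩ : ∃ b ∈ Set.Icc (0:ℝ) B, g b = 1 := by
      have hsub := intermediate_value_Icc' hB0 hcont.continuousOn
      have h1 : (1:ℝ) ∈ Set.Icc (g B) (g 0) := ⟨hgB.le, hg0⟩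
      obtain ⟨b, hb1, hb2⟩ := hsub h1
      exact ⟨b, hb1, hb2⟩
    have hb0 : 0 ≤ b := hbmem.1
    have hSb : ∑' n : ℕ, Real.exp (h - b * (n + 1)) * K (n + 1) = 1 := by
      rw [← hgS b hb0]; exact hgb
    refine ⟨b, ⟨hb0, hSb⟩, ?_⟩
    intro y ⟨hy0, hSy⟩
    rcases lt_trichotomy y b with hlt | heq | hgt
    · exfalso
      have := hmono h y b hy0 hlt
      rw [hSy, hSb] at this
      exact lt_irrefl 1 this
    · exact heq
    · exfalso
      have := hmono h b y hb0 hgt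
      rw [hSy, hSb] at this
      exact lt_irrefl 1 this
  · -- Part 2 : the free-energy limit
    intro h b hcase
    rcases hcase with ⟨hh, hb0, hSb⟩ | ⟨hh, rfl⟩
    · exact FE_main K h b hKnn hKsummable n0 hn0 hpos hKlog hb0 hSb.le (Or.inr hSb)
    · refine FE_main K h 0 hKnn hKsummable n0 hn0 hpos hKlog le_rfl ?_ (Or.inl rfl)
      rw [hS0 h]
      have h1 : Real.exp h < Real.exp (- Real.log T) := Real.exp_lt_exp.2 hh
      rw [Real.exp_neg, Real.exp_log hT] at h1
      calc Real.exp h * T ≤ T⁻¹ * T := mul_le_mul_of_nonneg_right h1.le hT.le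
        _ = 1 := inv_mul_cancel₀ hT.ne'
end

section
/- Assume Σ_{n≥1} K(n) = 1 and let h > 0 (so that F(0,h) > 0). Then for every N ≥ 1 the free homogeneous partition function satisfies the two-sided bound e^{−h} e^{F(0,h) N} ≤ Z^f_{N,h} ≤ e^{F(0,h) N} / (1 − e^{−F(0,h)}). -/
open MeasureTheory ProbabilityTheory Filter Topology

namespace PFaux

/-! ### Combinatorial part -/

lemma comp_zero_blocks : ∀ c : Composition 0, c.blocks = [] := by
  intro c
  have h := c.blocks_sum
  cases hb : c.blocks with
  | nil => rfl
  | cons a l =>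
      exfalso
      have ha := c.blocks_pos (by rw [hb]; exact List.mem_cons_self)
      rw [hb, List.sum_cons] at h
      omega

lemma Zc_zero (K f) : Zc K f 0 = 1 := by
  rw [Zc]
  have h1 : ∀ c : Composition 0,
      (∏ i : Fin c.length, K (c.blocksFun i) * Real.exp (f (c.sizeUpTo (i + 1)))) = 1 := by
    intro c
    have hlen : c.length = 0 := by simp [Composition.length, comp_zero_blocks c]
    haveI : IsEmpty (Fin c.length) := ⟨fun i => by have := i.2; omega⟩
    exact Finset.prod_of_isEmpty _
  rw [Finset.sum_congr rfl (fun c _ => h1 c), Finset.sum_const]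
  simp [composition_card]

lemma comp_blocks_ne_nil {N : ℕ} (c : Composition (N + 1)) : c.blocks ≠ [] := by
  intro hb
  have := c.blocks_sum
  rw [hb] at this
  simp at this

/-- Equiv between compositions of `N+1` and pairs (first block size − 1, rest). -/
def consEquiv (N : ℕ) : (Σ m : Fin (N + 1), Composition (N - m)) ≃ Composition (N + 1) where
  toFun x := ⟨(x.1 + 1) :: x.2.blocks,
    by
      intro i hi
      rcases List.mem_cons.1 hi with h | h
      · omega
      · exact x.2.blocks_pos h,
    by
      rw [List.sum_cons, x.2.blocks_sum]
      have := x.1.2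
      omega⟩
  invFun c :=
    have hne : c.blocks ≠ [] := comp_blocks_ne_nil c
    have hmem : c.blocks.head hne ∈ c.blocks := List.head_mem hne
    have hpos : 0 < c.blocks.head hne := c.blocks_pos hmem
    have hle : c.blocks.head hne ≤ c.blocks.sum :=
      List.single_le_sum (fun _ _ => Nat.zero_le _) _ hmem
    have hsum : c.blocks.head hne + c.blocks.tail.sum = N + 1 := by
      rw [← List.sum_cons, List.cons_head_tail, c.blocks_sum]
    ⟨⟨c.blocks.head hne - 1, by rw [c.blocks_sum] at hle; omega⟩,
    ⟨c.blocks.tail,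
      fun hi => c.blocks_pos (List.mem_of_mem_tail hi),
      by show c.blocks.tail.sum = N - (c.blocks.head hne - 1); omega⟩⟩
  left_inv x := rfl
  right_inv c := by
    have hne : c.blocks ≠ [] := comp_blocks_ne_nil c
    have hpos : 0 < c.blocks.head hne := c.blocks_pos (List.head_mem hne)
    ext1
    show (c.blocks.head hne - 1 + 1) :: c.blocks.tail = c.blocks
    rw [Nat.sub_add_cancel hpos, List.cons_head_tail]

lemma ZcHom_succ (K : ℕ → ℝ) (h : ℝ) (N : ℕ) :
    ZcHom K h (N + 1)
      = ∑ m ∈ Finset.range (N + 1), K (m + 1) * Real.exp h * ZcHom K h (N - m) := by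
  rw [ZcHom, Zc, ← Equiv.sum_comp (consEquiv N), ← Finset.univ_sigma_univ, Finset.sum_sigma]
  rw [← Fin.sum_univ_eq_sum_range (fun m => K (m + 1) * Real.exp h * ZcHom K h (N - m))]
  refine Finset.sum_congr rfl fun m _ => ?_
  have hstep : ∀ d : Composition (N - (m : ℕ)),
      (∏ i : Fin (consEquiv N ⟨m, d⟩).length,
        K ((consEquiv N ⟨m, d⟩).blocksFun i) * Real.exp h)
      = K ((m : ℕ) + 1) * Real.exp h *
          ∏ i : Fin d.length, K (d.blocksFun i) * Real.exp h := by
    intro d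
    have hlen : (consEquiv N ⟨m, d⟩).length = d.length + 1 := rfl
    rw [show (∏ i : Fin (consEquiv N ⟨m, d⟩).length,
        K ((consEquiv N ⟨m, d⟩).blocksFun i) * Real.exp h)
      = ∏ i : Fin (d.length + 1),
          K ((consEquiv N ⟨m, d⟩).blocksFun (Fin.cast hlen.symm i)) * Real.exp h from
      (Fin.prod_congr' _ hlen).symm]
    rw [Fin.prod_univ_succ]
    rfl
  calc (∑ d : Composition (N - (m : ℕ)),
        ∏ i : Fin (consEquiv N ⟨m, d⟩).length,
          K ((consEquiv N ⟨m, d⟩).blocksFun i) * Real.exp h)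
      = ∑ d : Composition (N - (m : ℕ)), K ((m : ℕ) + 1) * Real.exp h *
          ∏ i : Fin d.length, K (d.blocksFun i) * Real.exp h :=
        Finset.sum_congr rfl fun d _ => hstep d
    _ = K ((m : ℕ) + 1) * Real.exp h * ZcHom K h (N - (m : ℕ)) := by
        rw [← Finset.mul_sum]; rfl

lemma ZcHom_nonneg (K : ℕ → ℝ) (hKnn : ∀ n, 0 ≤ K n) (h : ℝ) (N : ℕ) :
    0 ≤ ZcHom K h N := by
  rw [ZcHom, Zc]
  refine Finset.sum_nonneg fun c _ => Finset.prod_nonneg fun i _ => ?_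
  exact mul_nonneg (hKnn _) (Real.exp_pos _).le

/-! ### Kbar lemmas -/

lemma Kbar_zero (K : ℕ → ℝ) : Kbar K 0 = 1 := by simp [Kbar]

lemma Kbar_succ (K : ℕ → ℝ) (m : ℕ) : Kbar K (m + 1) = Kbar K m - K (m + 1) := by
  rw [Kbar, Kbar, Finset.sum_Icc_succ_top (by omega : 1 ≤ m + 1)]
  ring

lemma Kbar_eq_one_sub_range (K : ℕ → ℝ) (m : ℕ) :
    Kbar K m = 1 - ∑ i ∈ Finset.range m, K (i + 1) := by
  induction m with
  | zero => simp [Kbar_zero]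
  | succ m ih => rw [Kbar_succ, ih, Finset.sum_range_succ]; ring

lemma Kbar_eq_tsum (K : ℕ → ℝ) (hs : Summable fun n => K (n + 1))
    (h1 : ∑' n, K (n + 1) = 1) (m : ℕ) : Kbar K m = ∑' i, K (i + m + 1) := by
  have h2 := Summable.sum_add_tsum_nat_add (f := fun n => K (n + 1)) m hs
  rw [h1] at h2
  rw [Kbar_eq_one_sub_range]
  linarith [h2]

lemma Kbar_nonneg (K : ℕ → ℝ) (hnn : ∀ n, 0 ≤ K n) (hs : Summable fun n => K (n + 1))
    (h1 : ∑' n, K (n + 1) ≤ 1) (m : ℕ) : 0 ≤ Kbar K m := by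
  rw [Kbar_eq_one_sub_range]
  have := Summable.sum_le_tsum (Finset.range m) (fun i _ => hnn (i + 1)) hs
  linarith

lemma Kbar_le_one (K : ℕ → ℝ) (hnn : ∀ n, 0 ≤ K n) (m : ℕ) : Kbar K m ≤ 1 := by
  rw [Kbar_eq_one_sub_range]
  have : 0 ≤ ∑ i ∈ Finset.range m, K (i + 1) := Finset.sum_nonneg fun i _ => hnn _
  linarith

/-- Renewal identity: for any sequence satisfying the renewal recursion,
`∑_{n=0}^N u n * Kbar(N-n) = 1`. -/
lemma renewal_S (Kt : ℕ → ℝ) (u : ℕ → ℝ) (hu0 : u 0 = 1)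
    (hrec : ∀ N, u (N + 1) = ∑ m ∈ Finset.range (N + 1), Kt (m + 1) * u (N - m)) :
    ∀ N, ∑ n ∈ Finset.range (N + 1), u n * Kbar Kt (N - n) = 1 := by
  intro N
  induction N with
  | zero => simp [hu0, Kbar_zero]
  | succ N ih =>
      rw [Finset.sum_range_succ]
      have hlast : u (N + 1) * Kbar Kt (N + 1 - (N + 1)) = u (N + 1) := by
        simp [Kbar_zero]
      rw [hlast]
      have hsplit : ∀ n ∈ Finset.range (N + 1),
          u n * Kbar Kt (N + 1 - n) = u n * Kbar Kt (N - n) - u n * Kt (N - n + 1) := by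
        intro n hn
        have hn' : n ≤ N := by simpa [Nat.lt_succ_iff] using hn
        have : N + 1 - n = (N - n) + 1 := by omega
        rw [this, Kbar_succ]
        ring
      rw [Finset.sum_congr rfl hsplit, Finset.sum_sub_distrib, ih]
      have hre : ∑ n ∈ Finset.range (N + 1), u n * Kt (N - n + 1) = u (N + 1) := by
        rw [hrec N]
        rw [← Finset.sum_range_reflect (fun m => Kt (m + 1) * u (N - m)) (N + 1)]
        refine Finset.sum_congr rfl fun n hn => ?_
        have hn' : n ≤ N := by simpa [Nat.lt_succ_iff] using hn
        have h1 : N + 1 - 1 - n = N - n := by omega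
        have h2 : N - (N - n) = n := by omega
        rw [h1, h2, mul_comm]
      rw [hre]
      ring

/-! ### Tilted kernel -/

noncomputable def Kt (K : ℕ → ℝ) (h F : ℝ) (n : ℕ) : ℝ := Real.exp (h - F * n) * K n

lemma Kt_nonneg (K : ℕ → ℝ) (hKnn : ∀ n, 0 ≤ K n) (h F : ℝ) (n : ℕ) :
    0 ≤ Kt K h F n := mul_nonneg (Real.exp_pos _).le (hKnn n)

lemma Kt_le (K : ℕ → ℝ) (hKnn : ∀ n, 0 ≤ K n) (h : ℝ) {F : ℝ} (hF : 0 ≤ F) (n : ℕ) :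
    Kt K h F (n + 1) ≤ Real.exp h * K (n + 1) := by
  refine mul_le_mul_of_nonneg_right ?_ (hKnn _)
  refine Real.exp_le_exp.2 ?_
  have : 0 ≤ F * ((n : ℝ) + 1) := mul_nonneg hF (by positivity)
  push_cast
  linarith

lemma Kt_summable (K : ℕ → ℝ) (hKnn : ∀ n, 0 ≤ K n)
    (hKsummable : Summable fun n : ℕ => K (n + 1)) (h : ℝ) {F : ℝ} (hF : 0 ≤ F) :
    Summable fun n => Kt K h F (n + 1) :=
  Summable.of_nonneg_of_le (fun n => Kt_nonneg K hKnn h F (n + 1))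
    (fun n => Kt_le K hKnn h hF n) (hKsummable.mul_left (Real.exp h))

noncomputable def Phi (K : ℕ → ℝ) (h F : ℝ) : ℝ := ∑' n, Kt K h F (n + 1)

lemma Phi_zero (K : ℕ → ℝ) (h : ℝ) (hpers : ∑' n : ℕ, K (n + 1) = 1) :
    Phi K h 0 = Real.exp h := by
  rw [Phi]
  have : ∀ n : ℕ, Kt K h 0 (n + 1) = Real.exp h * K (n + 1) := by
    intro n; rw [Kt]; norm_num
  rw [tsum_congr this, tsum_mul_left, hpers, mul_one]

lemma Phi_at_h_le_one (K : ℕ → ℝ) (hKnn : ∀ n, 0 ≤ K n)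
    (hKsummable : Summable fun n : ℕ => K (n + 1)) (hpers : ∑' n : ℕ, K (n + 1) = 1)
    {h : ℝ} (hh : 0 < h) : Phi K h h ≤ 1 := by
  rw [← hpers, Phi]
  refine Summable.tsum_le_tsum (fun n => ?_) (Kt_summable K hKnn hKsummable h hh.le) hKsummable
  rw [Kt]
  have h1 : Real.exp (h - h * ((n : ℕ) + 1 : ℕ)) ≤ 1 := by
    rw [Real.exp_le_one_iff]
    push_cast
    nlinarith [hh.le, (Nat.cast_nonneg n : (0:ℝ) ≤ n)]
  nth_rewrite 2 [← one_mul (K (n + 1))]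
  exact mul_le_mul_of_nonneg_right h1 (hKnn _)

lemma Phi_continuousOn (K : ℕ → ℝ) (hKnn : ∀ n, 0 ≤ K n)
    (hKsummable : Summable fun n : ℕ => K (n + 1)) (h b : ℝ) :
    ContinuousOn (Phi K h) (Set.Icc 0 b) := by
  rw [continuousOn_iff_continuous_restrict]
  have : (Set.Icc (0:ℝ) b).restrict (Phi K h)
      = fun x : Set.Icc (0:ℝ) b => ∑' n, Kt K h (x : ℝ) (n + 1) := rfl
  change Continuous (fun x : Set.Icc (0:ℝ) b => ∑' n, Kt K h (x : ℝ) (n + 1))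
  refine continuous_tsum (f := fun n (x : Set.Icc (0:ℝ) b) => Kt K h (x : ℝ) (n + 1))
    (fun n => ?_) (hKsummable.mul_left (Real.exp h)) (fun n x => ?_)
  · unfold Kt
    fun_prop
  · have hx : (0:ℝ) ≤ x := x.2.1
    rw [Real.norm_eq_abs, abs_of_nonneg (Kt_nonneg K hKnn h _ _)]
    exact Kt_le K hKnn h hx n

lemma exists_Fstar (K : ℕ → ℝ) (hKnn : ∀ n, 0 ≤ K n)
    (hKsummable : Summable fun n : ℕ => K (n + 1)) (hpers : ∑' n : ℕ, K (n + 1) = 1)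
    {h : ℝ} (hh : 0 < h) : ∃ F : ℝ, 0 < F ∧ F ≤ h ∧ Phi K h F = 1 := by
  have hsub : Set.Icc (Phi K h h) (Phi K h 0) ⊆ Phi K h '' Set.Icc 0 h :=
    intermediate_value_Icc' hh.le (Phi_continuousOn K hKnn hKsummable h h)
  have h1 : (1:ℝ) ∈ Set.Icc (Phi K h h) (Phi K h 0) := by
    constructor
    · exact Phi_at_h_le_one K hKnn hKsummable hpers hh
    · rw [Phi_zero K h hpers]
      exact (Real.one_lt_exp_iff.2 hh).le
  obtain ⟨F, hF, hPhi⟩ := hsub h1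
  refine ⟨F, ?_, hF.2, hPhi⟩
  rcases hF.1.eq_or_lt with rfl | hpos
  · exfalso
    rw [Phi_zero K h hpers] at hPhi
    have := Real.one_lt_exp_iff.2 hh
    linarith
  · exact hpos

lemma Phi_lower (K : ℕ → ℝ) (hKnn : ∀ n, 0 ≤ K n)
    (hKsummable : Summable fun n : ℕ => K (n + 1)) (h : ℝ) {F' F : ℝ}
    (hF' : 0 ≤ F') (hle : F' ≤ F) :
    Real.exp (F - F') * Phi K h F ≤ Phi K h F' := by
  rw [Phi, Phi, ← tsum_mul_left]
  refine Summable.tsum_le_tsum (fun n => ?_)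
    ((Kt_summable K hKnn hKsummable h (hF'.trans hle)).mul_left _)
    (Kt_summable K hKnn hKsummable h hF')
  rw [Kt, Kt, ← mul_assoc, ← Real.exp_add]
  refine mul_le_mul_of_nonneg_right (Real.exp_le_exp.2 ?_) (hKnn _)
  push_cast
  nlinarith [(Nat.cast_nonneg n : (0:ℝ) ≤ n)]

end PFaux

namespace PFaux

/-! ### Tilted partition function -/

/-- tilted partition function -/
noncomputable def uu (K : ℕ → ℝ) (h F : ℝ) (N : ℕ) : ℝ :=
  Real.exp (-(F * N)) * ZcHom K h N

lemma uu_zero (K : ℕ → ℝ) (h F : ℝ) : uu K h F 0 = 1 := by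
  simp [uu, ZcHom, Zc_zero]

lemma uu_nonneg (K : ℕ → ℝ) (hKnn : ∀ n, 0 ≤ K n) (h F : ℝ) (N : ℕ) :
    0 ≤ uu K h F N := mul_nonneg (Real.exp_pos _).le (ZcHom_nonneg K hKnn h N)

lemma uu_rec (K : ℕ → ℝ) (h F : ℝ) (N : ℕ) :
    uu K h F (N + 1) = ∑ m ∈ Finset.range (N + 1), Kt K h F (m + 1) * uu K h F (N - m) := by
  rw [uu, ZcHom_succ, Finset.mul_sum]
  refine Finset.sum_congr rfl fun m hm => ?_
  have hm' : m ≤ N := by simpa [Nat.lt_succ_iff] using hm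
  rw [Kt, uu]
  have hcast : ((N - m : ℕ) : ℝ) = (N : ℝ) - m := by
    rw [Nat.cast_sub hm']
  have hexp : Real.exp (-(F * ((N : ℕ) + 1 : ℕ))) * Real.exp h
      = Real.exp (h - F * ((m : ℕ) + 1 : ℕ)) * Real.exp (-(F * ((N - m : ℕ) : ℕ))) := by
    rw [← Real.exp_add, ← Real.exp_add]
    congr 1
    rw [hcast]
    push_cast
    ring
  calc Real.exp (-(F * ((N : ℕ) + 1 : ℕ))) * (K (m + 1) * Real.exp h * ZcHom K h (N - m))
      = (Real.exp (-(F * ((N : ℕ) + 1 : ℕ))) * Real.exp h) * (K (m + 1) * ZcHom K h (N - m)) := by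
        push_cast
        ring
    _ = (Real.exp (h - F * ((m : ℕ) + 1 : ℕ)) * Real.exp (-(F * ((N - m : ℕ) : ℕ))))
          * (K (m + 1) * ZcHom K h (N - m)) := by rw [hexp]
    _ = Real.exp (h - F * ((m : ℕ) + 1 : ℕ)) * K (m + 1)
          * (Real.exp (-(F * ((N - m : ℕ) : ℕ))) * ZcHom K h (N - m)) := by push_cast; ring
    _ = _ := by norm_num

lemma uu_S (K : ℕ → ℝ) (h F : ℝ) (N : ℕ) :
    ∑ n ∈ Finset.range (N + 1), uu K h F n * Kbar (Kt K h F) (N - n) = 1 :=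
  renewal_S (Kt K h F) (uu K h F) (uu_zero K h F) (uu_rec K h F) N

lemma uu_le_one (K : ℕ → ℝ) (hKnn : ∀ n, 0 ≤ K n)
    (hKsummable : Summable fun n : ℕ => K (n + 1)) (h : ℝ) {F : ℝ} (hF : 0 ≤ F)
    (hPhi : Phi K h F = 1) (N : ℕ) : uu K h F N ≤ 1 := by
  have hS := uu_S K h F N
  have hterm : ∀ n ∈ Finset.range (N + 1), 0 ≤ uu K h F n * Kbar (Kt K h F) (N - n) := by
    intro n _
    exact mul_nonneg (uu_nonneg K hKnn h F n)
      (Kbar_nonneg _ (Kt_nonneg K hKnn h F) (Kt_summable K hKnn hKsummable h hF) hPhi.le _)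
  have hmem : N ∈ Finset.range (N + 1) := Finset.self_mem_range_succ N
  have := Finset.single_le_sum hterm hmem
  rw [hS] at this
  simpa [Kbar_zero] using this

lemma ZcHom_le_exp (K : ℕ → ℝ) (hKnn : ∀ n, 0 ≤ K n)
    (hKsummable : Summable fun n : ℕ => K (n + 1)) (h : ℝ) {F : ℝ} (hF : 0 ≤ F)
    (hPhi : Phi K h F = 1) (N : ℕ) : ZcHom K h N ≤ Real.exp (F * N) := by
  have h1 := uu_le_one K hKnn hKsummable h hF hPhi N
  rw [uu] at h1
  have h2 := mul_le_mul_of_nonneg_left h1 (Real.exp_pos (F * N)).le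
  rw [← mul_assoc, ← Real.exp_add] at h2
  simpa using h2

lemma F0_le (K : ℕ → ℝ) (hKnn : ∀ n, 0 ≤ K n)
    (hKsummable : Summable fun n : ℕ => K (n + 1)) (h : ℝ) {F : ℝ} (hF : 0 < F)
    (hPhi : Phi K h F = 1) : F0 K h ≤ F := by
  refine ciSup_le fun N => ?_
  rw [div_le_iff₀ (by positivity)]
  have hZ := ZcHom_le_exp K hKnn hKsummable h hF.le hPhi (N + 1)
  rcases (ZcHom_nonneg K hKnn h (N + 1)).eq_or_lt with hz | hz
  · rw [← hz, Real.log_zero]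
    positivity
  · have := (Real.log_le_iff_le_exp hz).2 (by exact_mod_cast hZ)
    calc Real.log (ZcHom K h (N + 1)) ≤ F * ((N + 1 : ℕ) : ℝ) := this
      _ = F * ((N : ℝ) + 1) := by push_cast; ring

lemma F0_bddAbove (K : ℕ → ℝ) (hKnn : ∀ n, 0 ≤ K n)
    (hKsummable : Summable fun n : ℕ => K (n + 1)) (h : ℝ) {F : ℝ} (hF : 0 < F)
    (hPhi : Phi K h F = 1) :
    BddAbove (Set.range fun N : ℕ => Real.log (ZcHom K h (N + 1)) / ((N : ℝ) + 1)) := by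
  refine ⟨F, ?_⟩
  rintro x ⟨N, rfl⟩
  rw [div_le_iff₀ (by positivity)]
  have hZ := ZcHom_le_exp K hKnn hKsummable h hF.le hPhi (N + 1)
  rcases (ZcHom_nonneg K hKnn h (N + 1)).eq_or_lt with hz | hz
  · rw [← hz, Real.log_zero]
    positivity
  · have := (Real.log_le_iff_le_exp hz).2 (by exact_mod_cast hZ)
    calc Real.log (ZcHom K h (N + 1)) ≤ F * ((N + 1 : ℕ) : ℝ) := this
      _ = F * ((N : ℝ) + 1) := by push_cast; ring

end PFaux

namespace PFaux

lemma ZcHom_le_exp_F0 (K : ℕ → ℝ) (hKnn : ∀ n, 0 ≤ K n)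
    (hKsummable : Summable fun n : ℕ => K (n + 1)) (h : ℝ) {F : ℝ} (hF : 0 < F)
    (hPhi : Phi K h F = 1) (N : ℕ) :
    ZcHom K h (N + 1) ≤ Real.exp (F0 K h * (N + 1 : ℕ)) := by
  have hb := F0_bddAbove K hKnn hKsummable h hF hPhi
  have h1 : Real.log (ZcHom K h (N + 1)) / ((N : ℝ) + 1) ≤ F0 K h :=
    le_ciSup hb N
  have h2 : Real.log (ZcHom K h (N + 1)) ≤ F0 K h * ((N : ℝ) + 1) := by
    rw [div_le_iff₀ (by positivity)] at h1
    linarith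
  rcases (ZcHom_nonneg K hKnn h (N + 1)).eq_or_lt with hz | hz
  · rw [← hz]; positivity
  · rw [Real.log_le_iff_le_exp hz] at h2
    calc ZcHom K h (N + 1) ≤ Real.exp (F0 K h * ((N : ℝ) + 1)) := h2
      _ = Real.exp (F0 K h * ((N + 1 : ℕ) : ℝ)) := by push_cast; ring_nf

lemma le_F0 (K : ℕ → ℝ) (hKnn : ∀ n, 0 ≤ K n)
    (hKsummable : Summable fun n : ℕ => K (n + 1)) (hpers : ∑' n : ℕ, K (n + 1) = 1)
    (h : ℝ) {F : ℝ} (hF : 0 < F) (hPhi : Phi K h F = 1) : F ≤ F0 K h := by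
  by_contra hlt
  push_neg at hlt
  set G := (max (F0 K h) 0 + F) / 2 with hGdef
  have hG0 : 0 < G := by
    have := le_max_right (F0 K h) 0
    have := hF
    rw [hGdef]; positivity
  have hGltF : G < F := by
    have h1 : max (F0 K h) 0 < F := max_lt hlt hF
    rw [hGdef]; linarith
  have hF0G : F0 K h < G := by
    have h1 : F0 K h ≤ max (F0 K h) 0 := le_max_left _ _
    have h2 : max (F0 K h) 0 < F := max_lt hlt hF
    rw [hGdef]; linarith
  set v : ℕ → ℝ := fun N => uu K h G N with hvdef
  have hv0 : v 0 = 1 := uu_zero K h G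
  have hvnn : ∀ n, 0 ≤ v n := uu_nonneg K hKnn h G
  set r := Real.exp (F0 K h - G) with hrdef
  have hr0 : 0 < r := Real.exp_pos _
  have hr1 : r < 1 := Real.exp_lt_one_iff.2 (by linarith)
  have hvle : ∀ n, v n ≤ r ^ n := by
    intro n
    cases n with
    | zero => simp [hv0]
    | succ M =>
        have hZ := ZcHom_le_exp_F0 K hKnn hKsummable h hF hPhi M
        have : v (M + 1) = Real.exp (-(G * ((M + 1 : ℕ) : ℝ))) * ZcHom K h (M + 1) := rfl
        rw [this]
        calc Real.exp (-(G * ((M + 1 : ℕ) : ℝ))) * ZcHom K h (M + 1)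
            ≤ Real.exp (-(G * ((M + 1 : ℕ) : ℝ))) * Real.exp (F0 K h * (M + 1 : ℕ)) :=
              mul_le_mul_of_nonneg_left hZ (Real.exp_pos _).le
          _ = Real.exp ((F0 K h - G) * ((M + 1 : ℕ) : ℝ)) := by
              rw [← Real.exp_add]; congr 1; ring
          _ = r ^ (M + 1) := by
              rw [hrdef, ← Real.exp_nat_mul]
              congr 1
              push_cast
              ring
  have hB : ∀ T : ℕ, ∑ n ∈ Finset.range T, v n ≤ 1 / (1 - r) := by
    intro T
    have h1 : ∑ n ∈ Finset.range T, v n ≤ ∑ n ∈ Finset.range T, r ^ n :=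
      Finset.sum_le_sum fun n _ => hvle n
    have h2 : ∑ n ∈ Finset.range T, r ^ n = (1 - r ^ T) / (1 - r) := by
      rw [geom_sum_eq (by linarith : r ≠ 1) T]
      rw [div_eq_div_iff (by linarith) (by linarith : (1:ℝ) - r ≠ 0)]
      ring
    have h3 : (1 - r ^ T) / (1 - r) ≤ 1 / (1 - r) := by
      have hpow : (0:ℝ) ≤ r ^ T := pow_nonneg hr0.le T
      apply div_le_div_of_nonneg_right (by linarith) (by linarith)
    linarith
  -- Phi G > 1
  have hPhiG : 1 < Phi K h G := by
    have h1 := Phi_lower K hKnn hKsummable h hG0.le hGltF.le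
    rw [hPhi, mul_one] at h1
    have h2 : 1 < Real.exp (F - G) := Real.one_lt_exp_iff.2 (by linarith)
    linarith
  obtain ⟨n₀, hA⟩ : ∃ n₀ : ℕ, 1 < ∑ m ∈ Finset.range n₀, Kt K h G (m + 1) := by
    have hs := (Kt_summable K hKnn hKsummable h hG0.le).hasSum.tendsto_sum_nat
    exact (hs.eventually (eventually_gt_nhds hPhiG)).exists
  set A := ∑ m ∈ Finset.range n₀, Kt K h G (m + 1) with hAdef
  have hA0 : 0 ≤ A := Finset.sum_nonneg fun m _ => Kt_nonneg K hKnn h G (m + 1)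
  have hkey : ∀ k : ℕ, A ^ k ≤ ∑ j ∈ Finset.range (k * n₀ + 1), v j := by
    intro k
    induction k with
    | zero => simp [hv0]
    | succ k ih =>
        have hvrec : ∀ N : ℕ, 1 ≤ N → v N = ∑ m ∈ Finset.range N, Kt K h G (m + 1) * v (N - 1 - m) := by
          intro N hN
          obtain ⟨M, rfl⟩ : ∃ M, N = M + 1 := ⟨N - 1, by omega⟩
          have hr := uu_rec K h G M
          simpa using hr
        have hn0 : 1 ≤ n₀ := by
          by_contra hc
          push_neg at hc
          interval_cases n₀
          · simp [hAdef] at hA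
            linarith
        have hinj : Function.Injective
            (fun p : (Σ _ : ℕ, ℕ) => (⟨p.2 + p.1 + 1, p.1⟩ : Σ _ : ℕ, ℕ)) := by
          intro p q hpq
          have h1 : p.2 + p.1 + 1 = q.2 + q.1 + 1 := congrArg Sigma.fst hpq
          have h2 : p.1 = q.1 := congrArg Sigma.snd hpq
          clear hpq
          obtain ⟨m1, j1⟩ := p
          obtain ⟨m2, j2⟩ := q
          dsimp only at h1 h2
          subst h2
          have hj : j1 = j2 := by omega
          subst hj
          rfl
        set e : (Σ _ : ℕ, ℕ) ↪ (Σ _ : ℕ, ℕ) :=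
          ⟨fun p => ⟨p.2 + p.1 + 1, p.1⟩, hinj⟩ with hedef
        set g : (Σ _ : ℕ, ℕ) → ℝ := fun q => Kt K h G (q.2 + 1) * v (q.1 - 1 - q.2) with hgdef
        have step : A * (∑ j ∈ Finset.range (k * n₀ + 1), v j)
            ≤ ∑ j ∈ Finset.range ((k + 1) * n₀ + 1), v j := by
          have c1 : A * (∑ j ∈ Finset.range (k * n₀ + 1), v j)
              = ∑ p ∈ (Finset.range n₀).sigma (fun _ => Finset.range (k * n₀ + 1)),
                  Kt K h G (p.1 + 1) * v p.2 := by
            rw [Finset.sum_sigma]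
            rw [hAdef, Finset.sum_mul]
            refine Finset.sum_congr rfl fun m _ => ?_
            rw [Finset.mul_sum]
          have c2 : ∑ p ∈ (Finset.range n₀).sigma (fun _ => Finset.range (k * n₀ + 1)),
                  Kt K h G (p.1 + 1) * v p.2
              = ∑ q ∈ ((Finset.range n₀).sigma (fun _ => Finset.range (k * n₀ + 1))).map e, g q := by
            rw [Finset.sum_map]
            refine Finset.sum_congr rfl fun p _ => ?_
            obtain ⟨m, jj⟩ := p
            simp only [hedef, hgdef, Function.Embedding.coeFn_mk]
            congr 2
            omega
          have hsub : ((Finset.range n₀).sigma (fun _ => Finset.range (k * n₀ + 1))).map e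
              ⊆ (Finset.Icc 1 ((k + 1) * n₀)).sigma (fun N => Finset.range N) := by
            intro q hq
            rw [Finset.mem_map] at hq
            obtain ⟨p, hp, rfl⟩ := hq
            obtain ⟨m, jj⟩ := p
            rw [Finset.mem_sigma] at hp
            obtain ⟨hp1, hp2⟩ := hp
            rw [Finset.mem_range] at hp1 hp2
            dsimp only at hp1 hp2
            have he : e ⟨m, jj⟩ = ⟨jj + m + 1, m⟩ := rfl
            rw [he, Finset.mem_sigma]
            have hmul : (k + 1) * n₀ = k * n₀ + n₀ := by ring
            constructor
            · rw [Finset.mem_Icc]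
              dsimp only
              omega
            · rw [Finset.mem_range]
              dsimp only
              omega
          have c3 : ∑ q ∈ ((Finset.range n₀).sigma (fun _ => Finset.range (k * n₀ + 1))).map e, g q
              ≤ ∑ q ∈ (Finset.Icc 1 ((k + 1) * n₀)).sigma (fun N => Finset.range N), g q := by
            refine Finset.sum_le_sum_of_subset_of_nonneg hsub fun q _ _ => ?_
            exact mul_nonneg (Kt_nonneg K hKnn h G _) (hvnn _)
          have c4 : ∑ q ∈ (Finset.Icc 1 ((k + 1) * n₀)).sigma (fun N => Finset.range N), g q
              = ∑ N ∈ Finset.Icc 1 ((k + 1) * n₀), v N := by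
            rw [Finset.sum_sigma]
            refine Finset.sum_congr rfl fun N hN => ?_
            rw [Finset.mem_Icc] at hN
            exact (hvrec N hN.1).symm
          have c5 : ∑ N ∈ Finset.Icc 1 ((k + 1) * n₀), v N
              ≤ ∑ j ∈ Finset.range ((k + 1) * n₀ + 1), v j := by
            refine Finset.sum_le_sum_of_subset_of_nonneg ?_ fun j _ _ => hvnn j
            intro x hx
            rw [Finset.mem_Icc] at hx
            rw [Finset.mem_range]
            omega
          linarith [c1, c2, c3, c4, c5]
        calc A ^ (k + 1) = A * A ^ k := by ring
          _ ≤ A * (∑ j ∈ Finset.range (k * n₀ + 1), v j) :=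
              mul_le_mul_of_nonneg_left ih hA0
          _ ≤ _ := step
  have htend : Tendsto (fun k : ℕ => A ^ k) atTop atTop :=
    tendsto_pow_atTop_atTop_of_one_lt hA
  obtain ⟨k, hk⟩ := (htend.eventually (eventually_gt_atTop (1 / (1 - r)))).exists
  have := hkey k
  have := hB (k * n₀ + 1)
  linarith

end PFaux

namespace PFaux

lemma tail_summable (K : ℕ → ℝ) (hKsummable : Summable fun n : ℕ => K (n + 1)) (m : ℕ) :
    Summable fun i => K (i + m + 1) := by
  have := (summable_nat_add_iff (f := fun n => K (n + 1)) m).2 hKsummable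
  exact this

lemma Kbar_ge (K : ℕ → ℝ) (hKnn : ∀ n, 0 ≤ K n)
    (hKsummable : Summable fun n : ℕ => K (n + 1)) (hpers : ∑' n : ℕ, K (n + 1) = 1)
    (h : ℝ) {F : ℝ} (hF : 0 < F) (hPhi : Phi K h F = 1) (m : ℕ) :
    Real.exp (F * m - h) * Kbar (Kt K h F) m ≤ Kbar K m := by
  have hKtsum : Summable fun n : ℕ => Kt K h F (n + 1) :=
    Kt_summable K hKnn hKsummable h hF.le
  rw [Kbar_eq_tsum K hKsummable hpers m,
      Kbar_eq_tsum (Kt K h F) hKtsum hPhi m, ← tsum_mul_left]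
  refine Summable.tsum_le_tsum (fun i => ?_)
    ((tail_summable (Kt K h F) hKtsum m).mul_left _)
    (tail_summable K hKsummable m)
  rw [Kt, ← mul_assoc, ← Real.exp_add]
  nth_rewrite 2 [← one_mul (K (i + m + 1))]
  refine mul_le_mul_of_nonneg_right ?_ (hKnn _)
  rw [Real.exp_le_one_iff]
  push_cast
  nlinarith [(Nat.cast_nonneg i : (0:ℝ) ≤ i), hF.le]

lemma ZcHom_eq_exp_mul_uu (K : ℕ → ℝ) (h F : ℝ) (n : ℕ) :
    ZcHom K h n = Real.exp (F * n) * uu K h F n := by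
  rw [uu, ← mul_assoc, ← Real.exp_add]
  norm_num

lemma Zf_lower (K : ℕ → ℝ) (hKnn : ∀ n, 0 ≤ K n)
    (hKsummable : Summable fun n : ℕ => K (n + 1)) (hpers : ∑' n : ℕ, K (n + 1) = 1)
    (h : ℝ) {F : ℝ} (hF : 0 < F) (hPhi : Phi K h F = 1) (N : ℕ) :
    Real.exp (-h) * Real.exp (F * N) ≤ ZfHom K h N := by
  have hKtsum : Summable fun n : ℕ => Kt K h F (n + 1) :=
    Kt_summable K hKnn hKsummable h hF.le
  have key : ∀ n ∈ Finset.range (N + 1),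
      Real.exp (F * N - h) * (uu K h F n * Kbar (Kt K h F) (N - n))
        ≤ ZcHom K h n * Kbar K (N - n) := by
    intro n hn
    have hn' : n ≤ N := by simpa [Nat.lt_succ_iff] using hn
    have hcast : ((N - n : ℕ) : ℝ) = (N : ℝ) - n := by rw [Nat.cast_sub hn']
    have hKb := Kbar_ge K hKnn hKsummable hpers h hF hPhi (N - n)
    have hsplit : Real.exp (F * N - h) = Real.exp (F * n) * Real.exp (F * ((N - n : ℕ) : ℝ) - h) := by
      rw [← Real.exp_add]
      congr 1
      rw [hcast]
      ring
    calc Real.exp (F * N - h) * (uu K h F n * Kbar (Kt K h F) (N - n))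
        = (Real.exp (F * n) * uu K h F n) *
            (Real.exp (F * ((N - n : ℕ) : ℝ) - h) * Kbar (Kt K h F) (N - n)) := by
          rw [hsplit]; ring
      _ ≤ (Real.exp (F * n) * uu K h F n) * Kbar K (N - n) := by
          refine mul_le_mul_of_nonneg_left hKb ?_
          exact mul_nonneg (Real.exp_pos _).le (uu_nonneg K hKnn h F n)
      _ = ZcHom K h n * Kbar K (N - n) := by rw [← ZcHom_eq_exp_mul_uu]
  have hsum := Finset.sum_le_sum key
  rw [← Finset.mul_sum, uu_S K h F N, mul_one] at hsum
  calc Real.exp (-h) * Real.exp (F * N) = Real.exp (F * N - h) := by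
        rw [← Real.exp_add]; congr 1; ring
    _ ≤ ∑ n ∈ Finset.range (N + 1), ZcHom K h n * Kbar K (N - n) := hsum
    _ = ZfHom K h N := rfl

lemma Zf_upper (K : ℕ → ℝ) (hKnn : ∀ n, 0 ≤ K n)
    (hKsummable : Summable fun n : ℕ => K (n + 1)) (hpers : ∑' n : ℕ, K (n + 1) = 1)
    (h : ℝ) {F : ℝ} (hF : 0 < F) (hPhi : Phi K h F = 1) (N : ℕ) :
    ZfHom K h N ≤ Real.exp (F * N) / (1 - Real.exp (-F)) := by
  set q := Real.exp F with hqdef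
  have hq1 : (1:ℝ) < q := Real.one_lt_exp_iff.2 hF
  have hq0 : (0:ℝ) < q := Real.exp_pos F
  have step1 : ZfHom K h N ≤ ∑ n ∈ Finset.range (N + 1), q ^ n := by
    rw [ZfHom]
    refine Finset.sum_le_sum fun n _ => ?_
    have h1 : ZcHom K h n * Kbar K (N - n) ≤ ZcHom K h n * 1 :=
      mul_le_mul_of_nonneg_left (Kbar_le_one K hKnn _) (ZcHom_nonneg K hKnn h n)
    have h2 : ZcHom K h n ≤ Real.exp (F * n) := ZcHom_le_exp K hKnn hKsummable h hF.le hPhi n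
    have h3 : Real.exp (F * n) = q ^ n := by
      rw [hqdef, ← Real.exp_nat_mul]
      congr 1
      ring
    linarith
  have step2 : ∑ n ∈ Finset.range (N + 1), q ^ n = (q ^ (N + 1) - 1) / (q - 1) := by
    rw [geom_sum_eq (by linarith : q ≠ 1) (N + 1)]
  have step3 : (q ^ (N + 1) - 1) / (q - 1) ≤ q ^ (N + 1) / (q - 1) := by
    apply div_le_div_of_nonneg_right (by linarith) (by linarith)
  have step4 : q ^ (N + 1) / (q - 1) = Real.exp (F * N) / (1 - Real.exp (-F)) := by
    have hxN : Real.exp (F * N) = q ^ N := by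
      rw [hqdef, ← Real.exp_nat_mul]; congr 1; ring
    rw [hxN, Real.exp_neg, ← hqdef, pow_succ]
    rw [div_eq_div_iff (by linarith) ?hne]
    · field_simp
    · case hne =>
        have : q⁻¹ < 1 := by
          rw [inv_lt_one_iff₀]
          right; exact hq1
        linarith
  linarith

end PFaux


theorem free_partition_function_bounds
    (α : ℝ) (hα : 0 < α)
    (K L : ℕ → ℝ) (cK : ℝ) (hcK : 0 < cK)
    (hK0 : K 0 = 0) (hKnn : ∀ n, 0 ≤ K n)
    (hKsummable : Summable fun n : ℕ => K (n + 1))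
    (hKsum : ∑' n : ℕ, K (n + 1) ≤ 1)
    (hKform : ∀ n : ℕ, 1 ≤ n → K n = L n / (n : ℝ) ^ (1 + α))
    (hL : Tendsto L atTop (nhds cK))
    (hpers : ∑' n : ℕ, K (n + 1) = 1) (h : ℝ) (hh : 0 < h) :
    0 < F0 K h ∧
    ∀ N : ℕ, 1 ≤ N →
      Real.exp (-h) * Real.exp (F0 K h * N) ≤ ZfHom K h N ∧
      ZfHom K h N ≤ Real.exp (F0 K h * N) / (1 - Real.exp (-(F0 K h))) := by
  obtain ⟨F, hF0pos, hFh, hPhi⟩ := PFaux.exists_Fstar K hKnn hKsummable hpers hh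
  have hF0eq : F0 K h = F :=
    le_antisymm (PFaux.F0_le K hKnn hKsummable h hF0pos hPhi)
      (PFaux.le_F0 K hKnn hKsummable hpers h hF0pos hPhi)
  constructor
  · rw [hF0eq]; exact hF0pos
  · intro N _
    rw [hF0eq]
    exact ⟨PFaux.Zf_lower K hKnn hKsummable hpers h hF0pos hPhi N,
      PFaux.Zf_upper K hKnn hKsummable hpers h hF0pos hPhi N⟩
end
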